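/- arXiv:1009.2376 — 4 statements merged into one kernel-verified Lean document; each statement's English description precedes it below -/
import Mathlib

section
/- The cut metric satisfies the triangle inequality: for kernels W₁, W₂, W₃ defined on probability spaces S₁, S₂, S₃, one has δ_□(W₁,W₃) ≤ δ_□(W₁,W₂) + δ_□(W₂,W₃). -/
open MeasureTheory
open scoped ENNReal NNReal

/-- The cut norm defined with measurable sets. -/
noncomputable def cutNorm1 {S : Type} [MeasurableSpace S] (μ : Measure S)
    (W : S → S → ℝ) : ℝ :=
  sSup {r : ℝ | ∃ A B : Set S, MeasurableSet A ∧ MeasurableSet B ∧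
    r = |∫ p in A ×ˢ B, W p.1 p.2 ∂(μ.prod μ)|}

namespace CutTriangle
open Set

variable {S : Type} [MeasurableSpace S]

def cutSet (μ : Measure S) (W : S → S → ℝ) : Set ℝ :=
  {r : ℝ | ∃ A B : Set S, MeasurableSet A ∧ MeasurableSet B ∧
    r = |∫ p in A ×ˢ B, W p.1 p.2 ∂(μ.prod μ)|}

lemma cutNorm1_def (μ : Measure S) (W : S → S → ℝ) : cutNorm1 μ W = sSup (cutSet μ W) := rfl

lemma zero_mem_cutSet (μ : Measure S) (W : S → S → ℝ) : (0:ℝ) ∈ cutSet μ W :=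
  ⟨∅, ∅, MeasurableSet.empty, MeasurableSet.empty, by simp⟩

lemma cutNorm1_nonneg (μ : Measure S) (W : S → S → ℝ) : 0 ≤ cutNorm1 μ W :=
  Real.sSup_nonneg fun r hr => by
    obtain ⟨A, B, _, _, rfl⟩ := hr; exact abs_nonneg _

lemma cutSet_le_integral (μ : Measure S) {W : S → S → ℝ}
    (hW : Integrable (fun p : S × S => W p.1 p.2) (μ.prod μ)) :
    ∀ r ∈ cutSet μ W, r ≤ ∫ p, |W p.1 p.2| ∂(μ.prod μ) := by
  rintro r ⟨A, B, hA, hB, rfl⟩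
  calc |∫ p in A ×ˢ B, W p.1 p.2 ∂(μ.prod μ)|
      ≤ ∫ p in A ×ˢ B, |W p.1 p.2| ∂(μ.prod μ) := by
        simpa [Real.norm_eq_abs] using
          norm_integral_le_integral_norm (μ := (μ.prod μ).restrict (A ×ˢ B))
            (fun p : S × S => W p.1 p.2)
    _ ≤ ∫ p, |W p.1 p.2| ∂(μ.prod μ) :=
        setIntegral_le_integral hW.abs (Filter.Eventually.of_forall fun p => abs_nonneg _)

lemma bddAbove_cutSet (μ : Measure S) {W : S → S → ℝ}
    (hW : Integrable (fun p : S × S => W p.1 p.2) (μ.prod μ)) :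
    BddAbove (cutSet μ W) :=
  ⟨_, fun r hr => cutSet_le_integral μ hW r hr⟩

lemma abs_setIntegral_le_cutNorm1 (μ : Measure S) {W : S → S → ℝ}
    (hW : Integrable (fun p : S × S => W p.1 p.2) (μ.prod μ))
    {A B : Set S} (hA : MeasurableSet A) (hB : MeasurableSet B) :
    |∫ p in A ×ˢ B, W p.1 p.2 ∂(μ.prod μ)| ≤ cutNorm1 μ W :=
  le_csSup (bddAbove_cutSet μ hW) ⟨A, B, hA, hB, rfl⟩

lemma cutNorm1_le_integral (μ : Measure S) {W : S → S → ℝ}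
    (hW : Integrable (fun p : S × S => W p.1 p.2) (μ.prod μ)) :
    cutNorm1 μ W ≤ ∫ p, |W p.1 p.2| ∂(μ.prod μ) :=
  Real.sSup_le (cutSet_le_integral μ hW)
    (integral_nonneg fun p => abs_nonneg _)

lemma cutNorm1_congr_ae (μ : Measure S) {W W' : S → S → ℝ}
    (h : (fun p : S × S => W p.1 p.2) =ᵐ[μ.prod μ] (fun p : S × S => W' p.1 p.2)) :
    cutNorm1 μ W = cutNorm1 μ W' := by
  have hs : cutSet μ W = cutSet μ W' := by
    ext r
    constructor
    · rintro ⟨A, B, hA, hB, rfl⟩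
      exact ⟨A, B, hA, hB, by rw [integral_congr_ae (ae_restrict_of_ae h)]⟩
    · rintro ⟨A, B, hA, hB, rfl⟩
      exact ⟨A, B, hA, hB, by rw [integral_congr_ae (ae_restrict_of_ae h.symm)]⟩
  rw [cutNorm1_def, cutNorm1_def, hs]

lemma cutNorm1_add_le (μ : Measure S) {U V : S → S → ℝ}
    (hU : Integrable (fun p : S × S => U p.1 p.2) (μ.prod μ))
    (hV : Integrable (fun p : S × S => V p.1 p.2) (μ.prod μ)) :
    cutNorm1 μ (fun x y => U x y + V x y) ≤ cutNorm1 μ U + cutNorm1 μ V := by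
  apply Real.sSup_le _ (add_nonneg (cutNorm1_nonneg μ U) (cutNorm1_nonneg μ V))
  rintro r ⟨A, B, hA, hB, rfl⟩
  have hsplit : ∫ p in A ×ˢ B, (U p.1 p.2 + V p.1 p.2) ∂(μ.prod μ)
      = (∫ p in A ×ˢ B, U p.1 p.2 ∂(μ.prod μ)) + ∫ p in A ×ˢ B, V p.1 p.2 ∂(μ.prod μ) :=
    integral_add hU.restrict hV.restrict
  calc |∫ p in A ×ˢ B, (U p.1 p.2 + V p.1 p.2) ∂(μ.prod μ)|
      ≤ |∫ p in A ×ˢ B, U p.1 p.2 ∂(μ.prod μ)| + |∫ p in A ×ˢ B, V p.1 p.2 ∂(μ.prod μ)| := by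
        rw [hsplit]; exact abs_add_le _ _
    _ ≤ cutNorm1 μ U + cutNorm1 μ V :=
        add_le_add (abs_setIntegral_le_cutNorm1 μ hU hA hB)
          (abs_setIntegral_le_cutNorm1 μ hV hA hB)

lemma cutNorm1_neg (μ : Measure S) (W : S → S → ℝ) :
    cutNorm1 μ (fun x y => -W x y) = cutNorm1 μ W := by
  have hs : cutSet μ (fun x y => -W x y) = cutSet μ W := by
    ext r
    constructor
    · rintro ⟨A, B, hA, hB, rfl⟩
      exact ⟨A, B, hA, hB, by rw [integral_neg, abs_neg]⟩
    · rintro ⟨A, B, hA, hB, rfl⟩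
      refine ⟨A, B, hA, hB, ?_⟩
      rw [show (fun p : S × S => -W p.1 p.2) = fun p : S × S => -(W p.1 p.2) from rfl]
      rw [integral_neg, abs_neg]
  rw [cutNorm1_def, cutNorm1_def, hs]


variable {S : Type} [MeasurableSpace S]

section Fractional

variable (μ : Measure S) [IsFiniteMeasure μ]

lemma integrable_mul_mul {W : S → S → ℝ}
    (hW : Integrable (fun p : S × S => W p.1 p.2) (μ.prod μ))
    {a b : S → ℝ} (ha : Measurable a) (hb : Measurable b)
    (ha1 : ∀ x, |a x| ≤ 1) (hb1 : ∀ x, |b x| ≤ 1) :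
    Integrable (fun p : S × S => a p.1 * b p.2 * W p.1 p.2) (μ.prod μ) := by
  refine hW.bdd_mul
    (((ha.comp measurable_fst).mul (hb.comp measurable_snd)).aestronglyMeasurable) (c := 1) (Filter.Eventually.of_forall fun p => ?_)
  rw [Real.norm_eq_abs, abs_mul]
  calc |a p.1| * |b p.2| ≤ 1 * 1 :=
        mul_le_mul (ha1 p.1) (hb1 p.2) (abs_nonneg _) zero_le_one
    _ = 1 := one_mul 1

lemma integral_mul_mul_right (W : S → S → ℝ)
    (hW : Integrable (fun p : S × S => W p.1 p.2) (μ.prod μ))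
    {a b : S → ℝ} (ha : Measurable a) (hb : Measurable b)
    (ha1 : ∀ x, |a x| ≤ 1) (hb1 : ∀ x, |b x| ≤ 1) :
    ∫ p, a p.1 * b p.2 * W p.1 p.2 ∂(μ.prod μ)
      = ∫ y, b y * (∫ x, a x * W x y ∂μ) ∂μ := by
  rw [integral_prod_symm _ (integrable_mul_mul μ hW ha hb ha1 hb1)]
  refine integral_congr_ae (Filter.Eventually.of_forall fun y => ?_)
  show ∫ x, a x * b y * W x y ∂μ = b y * ∫ x, a x * W x y ∂μ
  rw [show (fun x => a x * b y * W x y) = fun x => b y * (a x * W x y) from funext fun x => by ring,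
    integral_const_mul]

lemma integral_mul_mul_left (W : S → S → ℝ)
    (hW : Integrable (fun p : S × S => W p.1 p.2) (μ.prod μ))
    {a b : S → ℝ} (ha : Measurable a) (hb : Measurable b)
    (ha1 : ∀ x, |a x| ≤ 1) (hb1 : ∀ x, |b x| ≤ 1) :
    ∫ p, a p.1 * b p.2 * W p.1 p.2 ∂(μ.prod μ)
      = ∫ x, a x * (∫ y, b y * W x y ∂μ) ∂μ := by
  rw [integral_prod _ (integrable_mul_mul μ hW ha hb ha1 hb1)]
  refine integral_congr_ae (Filter.Eventually.of_forall fun x => ?_)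
  show ∫ y, a x * b y * W x y ∂μ = a x * ∫ y, b y * W x y ∂μ
  rw [show (fun y => a x * b y * W x y) = fun y => a x * (b y * W x y) from funext fun y => by ring,
    integral_const_mul]

/-- indicator bounds -/
lemma indicator_abs_le_one (B : Set S) (x : S) : |B.indicator (fun _ => (1:ℝ)) x| ≤ 1 := by
  by_cases h : x ∈ B <;> simp [Set.indicator_of_mem, Set.indicator_of_notMem, h]

lemma step_right {W : S → S → ℝ}
    (hW : Integrable (fun p : S × S => W p.1 p.2) (μ.prod μ))
    {a b : S → ℝ} (ha : Measurable a) (hb : Measurable b)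
    (ha1 : ∀ x, |a x| ≤ 1) (hb0 : ∀ x, 0 ≤ b x) (hb1 : ∀ x, b x ≤ 1) :
    ∃ B' : Set S, MeasurableSet B' ∧
      ∫ p, a p.1 * b p.2 * W p.1 p.2 ∂(μ.prod μ)
        ≤ ∫ p, a p.1 * B'.indicator (fun _ => (1:ℝ)) p.2 * W p.1 p.2 ∂(μ.prod μ) := by
  have haW : Integrable (fun p : S × S => a p.1 * W p.1 p.2) (μ.prod μ) := by
    refine hW.bdd_mul ((ha.comp measurable_fst).aestronglyMeasurable) (c := 1) (Filter.Eventually.of_forall fun p => ?_)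
    simpa [Real.norm_eq_abs] using ha1 p.1
  set G : S → ℝ := fun y => ∫ x, a x * W x y ∂μ with hGdef
  have hG : Integrable G μ := haW.integral_prod_right
  set G' := hG.1.mk G with hG'def
  have hG'sm := hG.1.stronglyMeasurable_mk
  have heq := hG.1.ae_eq_mk
  set B' : Set S := {y | 0 < G' y} with hB'def
  have hB' : MeasurableSet B' := measurableSet_lt measurable_const hG'sm.measurable
  refine ⟨B', hB', ?_⟩
  rw [integral_mul_mul_right μ W hW ha hb ha1 (fun x => abs_le.2 ⟨le_trans (by norm_num) (hb0 x), hb1 x⟩),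
    integral_mul_mul_right μ W hW ha (measurable_const.indicator hB')
      ha1 (indicator_abs_le_one B')]
  have hint1 : Integrable (fun y => b y * G y) μ := by
    refine hG.bdd_mul (hb.aestronglyMeasurable) (c := 1) (Filter.Eventually.of_forall fun y => ?_)
    rw [Real.norm_eq_abs, abs_of_nonneg (hb0 y)]; exact hb1 y
  have hint2 : Integrable (fun y => B'.indicator (fun _ => (1:ℝ)) y * G y) μ := by
    refine hG.bdd_mul ((measurable_const.indicator hB').aestronglyMeasurable) (c := 1) (Filter.Eventually.of_forall fun y => ?_)
    simpa [Real.norm_eq_abs] using indicator_abs_le_one B' y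
  refine integral_mono_ae hint1 hint2 ?_
  filter_upwards [heq] with y hy
  by_cases h : 0 < G' y
  · have hmem : y ∈ B' := h
    rw [Set.indicator_of_mem hmem, one_mul]
    have hGy : 0 ≤ G y := by rw [hy]; exact le_of_lt h
    calc b y * G y ≤ 1 * G y := mul_le_mul_of_nonneg_right (hb1 y) hGy
      _ = G y := one_mul _
  · have hmem : y ∉ B' := h
    rw [Set.indicator_of_notMem hmem, zero_mul]
    have hGy : G y ≤ 0 := by rw [hy]; exact not_lt.1 h
    calc b y * G y ≤ b y * 0 := mul_le_mul_of_nonneg_left hGy (hb0 y)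
      _ = 0 := mul_zero _

lemma step_left {W : S → S → ℝ}
    (hW : Integrable (fun p : S × S => W p.1 p.2) (μ.prod μ))
    {a b : S → ℝ} (ha : Measurable a) (hb : Measurable b)
    (ha0 : ∀ x, 0 ≤ a x) (ha1 : ∀ x, a x ≤ 1) (hb1 : ∀ x, |b x| ≤ 1) :
    ∃ A' : Set S, MeasurableSet A' ∧
      ∫ p, a p.1 * b p.2 * W p.1 p.2 ∂(μ.prod μ)
        ≤ ∫ p, A'.indicator (fun _ => (1:ℝ)) p.1 * b p.2 * W p.1 p.2 ∂(μ.prod μ) := by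
  have ha1' : ∀ x, |a x| ≤ 1 := fun x => abs_le.2 ⟨le_trans (by norm_num) (ha0 x), ha1 x⟩
  have hbW : Integrable (fun p : S × S => b p.2 * W p.1 p.2) (μ.prod μ) := by
    refine hW.bdd_mul ((hb.comp measurable_snd).aestronglyMeasurable) (c := 1) (Filter.Eventually.of_forall fun p => ?_)
    simpa [Real.norm_eq_abs] using hb1 p.2
  set H : S → ℝ := fun x => ∫ y, b y * W x y ∂μ with hHdef
  have hH : Integrable H μ := hbW.integral_prod_left
  set H' := hH.1.mk H with hH'def
  have hH'sm := hH.1.stronglyMeasurable_mk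
  have heq := hH.1.ae_eq_mk
  set A' : Set S := {x | 0 < H' x} with hA'def
  have hA' : MeasurableSet A' := measurableSet_lt measurable_const hH'sm.measurable
  refine ⟨A', hA', ?_⟩
  rw [integral_mul_mul_left μ W hW ha hb ha1' hb1,
    integral_mul_mul_left μ W hW (measurable_const.indicator hA') hb
      (indicator_abs_le_one A') hb1]
  have hint1 : Integrable (fun x => a x * H x) μ := by
    refine hH.bdd_mul (ha.aestronglyMeasurable) (c := 1) (Filter.Eventually.of_forall fun x => ?_)
    simpa [Real.norm_eq_abs] using ha1' x
  have hint2 : Integrable (fun x => A'.indicator (fun _ => (1:ℝ)) x * H x) μ := by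
    refine hH.bdd_mul ((measurable_const.indicator hA').aestronglyMeasurable) (c := 1) (Filter.Eventually.of_forall fun x => ?_)
    simpa [Real.norm_eq_abs] using indicator_abs_le_one A' x
  refine integral_mono_ae hint1 hint2 ?_
  filter_upwards [heq] with x hx
  by_cases h : 0 < H' x
  · have hmem : x ∈ A' := h
    rw [Set.indicator_of_mem hmem, one_mul]
    have hHx : 0 ≤ H x := by rw [hx]; exact le_of_lt h
    calc a x * H x ≤ 1 * H x := mul_le_mul_of_nonneg_right (ha1 x) hHx
      _ = H x := one_mul _
  · have hmem : x ∉ A' := h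
    rw [Set.indicator_of_notMem hmem, zero_mul]
    have hHx : H x ≤ 0 := by rw [hx]; exact not_lt.1 h
    calc a x * H x ≤ a x * 0 := mul_le_mul_of_nonneg_left hHx (ha0 x)
      _ = 0 := mul_zero _

end Fractional


section Core
variable (μ : Measure S) [IsFiniteMeasure μ]

lemma integral_mul_mul_le_cutNorm1 {W : S → S → ℝ}
    (hW : Integrable (fun p : S × S => W p.1 p.2) (μ.prod μ))
    {a b : S → ℝ} (ha : Measurable a) (hb : Measurable b)
    (ha0 : ∀ x, 0 ≤ a x) (ha1 : ∀ x, a x ≤ 1) (hb0 : ∀ x, 0 ≤ b x) (hb1 : ∀ x, b x ≤ 1) :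
    ∫ p, a p.1 * b p.2 * W p.1 p.2 ∂(μ.prod μ) ≤ cutNorm1 μ W := by
  have ha1' : ∀ x, |a x| ≤ 1 := fun x => abs_le.2 ⟨le_trans (by norm_num) (ha0 x), ha1 x⟩
  obtain ⟨B', hB', h1⟩ := step_right μ hW ha hb ha1' hb0 hb1
  obtain ⟨A', hA', h2⟩ := step_left μ hW ha (measurable_const.indicator hB')
    ha0 ha1 (indicator_abs_le_one B')
  have h3 : (fun p : S × S => A'.indicator (fun _ => (1:ℝ)) p.1
        * B'.indicator (fun _ => (1:ℝ)) p.2 * W p.1 p.2)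
      = (A' ×ˢ B').indicator (fun p : S × S => W p.1 p.2) := by
    funext p
    by_cases h1' : p.1 ∈ A' <;> by_cases h2' : p.2 ∈ B' <;>
      simp [Set.indicator_of_mem, Set.indicator_of_notMem, h1', h2', Set.mem_prod,
        Set.indicator_apply]
  calc ∫ p, a p.1 * b p.2 * W p.1 p.2 ∂(μ.prod μ)
      ≤ ∫ p, a p.1 * B'.indicator (fun _ => (1:ℝ)) p.2 * W p.1 p.2 ∂(μ.prod μ) := h1
    _ ≤ ∫ p, A'.indicator (fun _ => (1:ℝ)) p.1 * B'.indicator (fun _ => (1:ℝ)) p.2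
          * W p.1 p.2 ∂(μ.prod μ) := h2
    _ = ∫ p in A' ×ˢ B', W p.1 p.2 ∂(μ.prod μ) := by
        rw [h3, integral_indicator (hA'.prod hB')]
    _ ≤ |∫ p in A' ×ˢ B', W p.1 p.2 ∂(μ.prod μ)| := le_abs_self _
    _ ≤ cutNorm1 μ W := abs_setIntegral_le_cutNorm1 μ hW hA' hB'

lemma abs_integral_mul_mul_le_cutNorm1 {W : S → S → ℝ}
    (hW : Integrable (fun p : S × S => W p.1 p.2) (μ.prod μ))
    {a b : S → ℝ} (ha : Measurable a) (hb : Measurable b)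
    (ha0 : ∀ x, 0 ≤ a x) (ha1 : ∀ x, a x ≤ 1) (hb0 : ∀ x, 0 ≤ b x) (hb1 : ∀ x, b x ≤ 1) :
    |∫ p, a p.1 * b p.2 * W p.1 p.2 ∂(μ.prod μ)| ≤ cutNorm1 μ W := by
  have hWneg : Integrable (fun p : S × S => -W p.1 p.2) (μ.prod μ) := hW.neg
  have hneg := integral_mul_mul_le_cutNorm1 μ (W := fun x y => -W x y) hWneg
    ha hb ha0 ha1 hb0 hb1
  rw [cutNorm1_neg] at hneg
  have hflip : ∫ p, a p.1 * b p.2 * -W p.1 p.2 ∂(μ.prod μ)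
      = -∫ p, a p.1 * b p.2 * W p.1 p.2 ∂(μ.prod μ) := by
    rw [← integral_neg]
    exact integral_congr_ae (Filter.Eventually.of_forall fun p => by ring)
  rw [hflip] at hneg
  exact abs_le.2 ⟨by linarith, integral_mul_mul_le_cutNorm1 μ hW ha hb ha0 ha1 hb0 hb1⟩

end Core

section Struct

lemma cyl_measurableSet {F : Type} {c : S → F} (hc : ∀ i, MeasurableSet (c ⁻¹' {i}))
    (R : Set (F × F)) (hR : R.Countable) :
    MeasurableSet ((fun p : S × S => (c p.1, c p.2)) ⁻¹' R) := by
  have hset : ((fun p : S × S => (c p.1, c p.2)) ⁻¹' R)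
      = ⋃ q ∈ R, (c ⁻¹' {q.1}) ×ˢ (c ⁻¹' {q.2}) := by
    ext p
    simp only [Set.mem_preimage, Set.mem_iUnion, Set.mem_prod, Set.mem_singleton_iff]
    constructor
    · intro h; exact ⟨(c p.1, c p.2), h, rfl, rfl⟩
    · rintro ⟨q, hq, h1, h2⟩
      have : (c p.1, c p.2) = q := Prod.ext h1 h2
      rw [this]; exact hq
  rw [hset]
  exact MeasurableSet.biUnion hR fun q _ => (hc q.1).prod (hc q.2)

/-- Cylinder sets over a finite factor. -/
def CylSet (U : Set (S × S)) : Prop :=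
  ∃ (F : Type) (_ : Fintype F) (c : S → F) (R : Set (F × F)),
    (∀ i, MeasurableSet (c ⁻¹' {i})) ∧ U = (fun p : S × S => (c p.1, c p.2)) ⁻¹' R

lemma CylSet.measurableSet {U : Set (S × S)} (h : CylSet U) : MeasurableSet U := by
  obtain ⟨F, hF, c, R, hc, rfl⟩ := h
  exact cyl_measurableSet hc R (Set.to_countable R)

lemma cylSet_empty : CylSet (∅ : Set (S × S)) :=
  ⟨Unit, inferInstance, fun _ => (), ∅, fun i => by
    simpa using MeasurableSet.univ.inter MeasurableSet.empty.compl.compl, by simp⟩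

lemma CylSet.compl {U : Set (S × S)} (h : CylSet U) : CylSet Uᶜ := by
  obtain ⟨F, hF, c, R, hc, rfl⟩ := h
  exact ⟨F, hF, c, Rᶜ, hc, rfl⟩

lemma CylSet.union {U V : Set (S × S)} (hU : CylSet U) (hV : CylSet V) : CylSet (U ∪ V) := by
  obtain ⟨F₁, hF₁, c₁, R₁, hc₁, rfl⟩ := hU
  obtain ⟨F₂, hF₂, c₂, R₂, hc₂, rfl⟩ := hV
  refine ⟨F₁ × F₂, @instFintypeProd _ _ hF₁ hF₂, fun x => (c₁ x, c₂ x),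
    {q : (F₁ × F₂) × F₁ × F₂ | (q.1.1, q.2.1) ∈ R₁ ∨ (q.1.2, q.2.2) ∈ R₂}, ?_, rfl⟩
  intro i
  have : (fun x => (c₁ x, c₂ x)) ⁻¹' {i} = (c₁ ⁻¹' {i.1}) ∩ (c₂ ⁻¹' {i.2}) := by
    ext x; simp [Prod.ext_iff]
  rw [this]; exact (hc₁ i.1).inter (hc₂ i.2)

lemma CylSet.inter {U V : Set (S × S)} (hU : CylSet U) (hV : CylSet V) : CylSet (U ∩ V) := by
  rw [← compl_compl (U ∩ V), Set.compl_inter]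
  exact ((hU.compl.union hV.compl)).compl

lemma cylSet_prod_univ {A : Set S} (hA : MeasurableSet A) : CylSet (A ×ˢ (Set.univ : Set S)) := by
  refine ⟨Bool, inferInstance, A.boolIndicator, {q : Bool × Bool | q.1 = true}, ?_, ?_⟩
  · intro i
    cases i
    · rw [Set.preimage_boolIndicator_false]; exact hA.compl
    · rw [Set.preimage_boolIndicator_true]; exact hA
  · ext p
    simp only [Set.mem_prod, Set.mem_univ, and_true, Set.mem_preimage, Set.mem_setOf_eq]
    exact Set.mem_iff_boolIndicator _ _

lemma cylSet_univ_prod {B : Set S} (hB : MeasurableSet B) : CylSet ((Set.univ : Set S) ×ˢ B) := by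
  refine ⟨Bool, inferInstance, B.boolIndicator, {q : Bool × Bool | q.2 = true}, ?_, ?_⟩
  · intro i
    cases i
    · rw [Set.preimage_boolIndicator_false]; exact hB.compl
    · rw [Set.preimage_boolIndicator_true]; exact hB
  · ext p
    simp only [Set.mem_prod, Set.mem_univ, true_and, Set.mem_preimage, Set.mem_setOf_eq]
    exact Set.mem_iff_boolIndicator _ _

lemma cylSet_prod {A B : Set S} (hA : MeasurableSet A) (hB : MeasurableSet B) :
    CylSet (A ×ˢ B) := by
  have : A ×ˢ B = (A ×ˢ (Set.univ : Set S)) ∩ ((Set.univ : Set S) ×ˢ B) := by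
    ext p; simp [Set.mem_prod, and_assoc]
  rw [this]
  exact (cylSet_prod_univ hA).inter (cylSet_univ_prod hB)

lemma cylSet_of_generateSetAlgebra {U : Set (S × S)}
    (hU : U ∈ MeasureTheory.generateSetAlgebra
      (Set.image2 (· ×ˢ ·) {s : Set S | MeasurableSet s} {t : Set S | MeasurableSet t})) :
    CylSet U := by
  induction hU with
  | base s hs =>
    obtain ⟨A, hA, B, hB, rfl⟩ := hs
    exact cylSet_prod hA hB
  | empty => exact cylSet_empty
  | compl s _ ih => exact ih.compl
  | union s t _ _ ihs iht => exact ihs.union iht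

lemma exists_cylSet_symmDiff_lt (μ : Measure S) [IsProbabilityMeasure μ]
    {E : Set (S × S)} (hE : MeasurableSet E) {ε : ℝ} (hε : 0 < ε) :
    ∃ U : Set (S × S), CylSet U ∧ (μ.prod μ) (symmDiff E U) < ENNReal.ofReal ε := by
  set 𝓡 := Set.image2 (· ×ˢ ·) {s : Set S | MeasurableSet s} {t : Set S | MeasurableSet t}
    with h𝓡
  have hgen : (inferInstance : MeasurableSpace (S × S))
      = MeasurableSpace.generateFrom (MeasureTheory.generateSetAlgebra 𝓡) := by
    rw [MeasureTheory.generateFrom_generateSetAlgebra_eq]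
    exact generateFrom_prod.symm
  have hdense := Measure.MeasureDense.of_generateFrom_isSetAlgebra_finite
    (μ := μ.prod μ) MeasureTheory.isSetAlgebra_generateSetAlgebra hgen
  obtain ⟨U, hUmem, hlt⟩ := hdense.approx E hE (measure_ne_top _ _) ε hε
  exact ⟨U, cylSet_of_generateSetAlgebra hUmem, hlt⟩

/-- Functions factoring through a finite measurable quotient. -/
def IsStruct (h : S × S → ℝ) : Prop :=
  ∃ (F : Type) (_ : Fintype F) (c : S → F) (w : F → F → ℝ),
    (∀ i, MeasurableSet (c ⁻¹' {i})) ∧ h = fun p => w (c p.1) (c p.2)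

lemma IsStruct.measurable {h : S × S → ℝ} (hh : IsStruct h) : Measurable h := by
  obtain ⟨F, hF, c, w, hc, rfl⟩ := hh
  intro t _
  letI := hF
  exact cyl_measurableSet hc {q : F × F | w q.1 q.2 ∈ t} (Set.to_countable _)

lemma IsStruct.bound {h : S × S → ℝ} (hh : IsStruct h) : ∃ C : ℝ, ∀ p, |h p| ≤ C := by
  obtain ⟨F, hF, c, w, hc, rfl⟩ := hh
  letI := hF
  refine ⟨∑ i : F, ∑ j : F, |w i j|, fun p => ?_⟩
  calc |w (c p.1) (c p.2)| ≤ ∑ j : F, |w (c p.1) j| :=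
        Finset.single_le_sum (f := fun j => |w (c p.1) j|)
          (fun j _ => abs_nonneg _) (Finset.mem_univ _)
    _ ≤ ∑ i : F, ∑ j : F, |w i j| :=
        Finset.single_le_sum (f := fun i => ∑ j : F, |w i j|)
          (fun i _ => Finset.sum_nonneg fun j _ => abs_nonneg _) (Finset.mem_univ _)

lemma IsStruct.integrable {h : S × S → ℝ} (hh : IsStruct h) (τ : Measure (S × S))
    [IsFiniteMeasure τ] : Integrable h τ := by
  obtain ⟨C, hC⟩ := hh.bound
  exact (integrable_const C).mono' hh.measurable.aestronglyMeasurable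
    (Filter.Eventually.of_forall fun p => by simpa [Real.norm_eq_abs] using hC p)

lemma IsStruct.add {h₁ h₂ : S × S → ℝ} (H1 : IsStruct h₁) (H2 : IsStruct h₂) :
    IsStruct (h₁ + h₂) := by
  obtain ⟨F₁, hF₁, c₁, w₁, hc₁, rfl⟩ := H1
  obtain ⟨F₂, hF₂, c₂, w₂, hc₂, rfl⟩ := H2
  refine ⟨F₁ × F₂, @instFintypeProd _ _ hF₁ hF₂, fun x => (c₁ x, c₂ x),
    fun i j => w₁ i.1 j.1 + w₂ i.2 j.2, ?_, rfl⟩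
  intro i
  have : (fun x => (c₁ x, c₂ x)) ⁻¹' {i} = (c₁ ⁻¹' {i.1}) ∩ (c₂ ⁻¹' {i.2}) := by
    ext x; simp [Prod.ext_iff]
  rw [this]; exact (hc₁ i.1).inter (hc₂ i.2)

lemma isStruct_indicator {U : Set (S × S)} (hU : CylSet U) (r : ℝ) :
    IsStruct (U.indicator fun _ => r) := by
  obtain ⟨F, hF, c, R, hc, rfl⟩ := hU
  refine ⟨F, hF, c, fun i j => R.indicator (fun _ => r) (i, j), hc, ?_⟩
  funext p
  show ((fun p : S × S => (c p.1, c p.2)) ⁻¹' R).indicator (fun _ => r) p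
      = R.indicator (fun _ => r) (c p.1, c p.2)
  by_cases hp : (c p.1, c p.2) ∈ R
  · rw [Set.indicator_of_mem hp,
      Set.indicator_of_mem (show p ∈ (fun p : S × S => (c p.1, c p.2)) ⁻¹' R from hp)]
  · rw [Set.indicator_of_notMem hp,
      Set.indicator_of_notMem (show p ∉ (fun p : S × S => (c p.1, c p.2)) ⁻¹' R from hp)]

end Struct

section Approx

variable (μ : Measure S) [IsProbabilityMeasure μ]

/-- `f` can be approximated in `L¹(μ × μ)` by structured functions. -/
def ApproxStruct (f : S × S → ℝ) : Prop :=
  ∀ ε : ℝ, 0 < ε → ∃ h : S × S → ℝ, IsStruct h ∧ ∫ p, |f p - h p| ∂(μ.prod μ) < ε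

lemma approxStruct_indicator {E : Set (S × S)} (hE : MeasurableSet E) (r : ℝ) :
    ApproxStruct μ (E.indicator fun _ => r) := by
  intro ε hε
  have hr1 : (0:ℝ) < |r| + 1 := by positivity
  have hε' : 0 < ε / (|r| + 1) := div_pos hε hr1
  obtain ⟨U, hcyl, hlt⟩ := exists_cylSet_symmDiff_lt μ hE hε'
  have hU : MeasurableSet U := hcyl.measurableSet
  refine ⟨U.indicator fun _ => r, isStruct_indicator hcyl r, ?_⟩
  have hpt : (fun p => |E.indicator (fun _ => r) p - U.indicator (fun _ => r) p|)
      = (symmDiff E U).indicator fun _ => |r| := by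
    funext p
    by_cases h1 : p ∈ E <;> by_cases h2 : p ∈ U <;>
      simp [Set.indicator_apply, h1, h2, Set.mem_symmDiff, zero_sub, abs_neg]
  have hmeas : MeasurableSet (symmDiff E U) := by
    rw [Set.symmDiff_def]
    exact (hE.diff hU).union (hU.diff hE)
  rw [hpt, integral_indicator_const _ hmeas]
  have hne : (μ.prod μ) (symmDiff E U) ≠ ⊤ := measure_ne_top _ _
  have htr : ((μ.prod μ) (symmDiff E U)).toReal < ε / (|r| + 1) := by
    rw [← ENNReal.lt_ofReal_iff_toReal_lt hne]
    exact hlt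
  have h0 : 0 ≤ ((μ.prod μ) (symmDiff E U)).toReal := ENNReal.toReal_nonneg
  calc ((μ.prod μ) (symmDiff E U)).toReal • |r|
      = ((μ.prod μ) (symmDiff E U)).toReal * |r| := rfl
    _ ≤ ((μ.prod μ) (symmDiff E U)).toReal * (|r| + 1) :=
        mul_le_mul_of_nonneg_left (by linarith) h0
    _ < (ε / (|r| + 1)) * (|r| + 1) := mul_lt_mul_of_pos_right htr hr1
    _ = ε := div_mul_cancel₀ ε (ne_of_gt hr1)

lemma approxStruct_add {f g : S × S → ℝ}
    (hf : Integrable f (μ.prod μ)) (hg : Integrable g (μ.prod μ))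
    (haf : ApproxStruct μ f) (hag : ApproxStruct μ g) :
    ApproxStruct μ (f + g) := by
  intro ε hε
  obtain ⟨h₁, hs₁, hd₁⟩ := haf (ε / 2) (by linarith)
  obtain ⟨h₂, hs₂, hd₂⟩ := hag (ε / 2) (by linarith)
  refine ⟨h₁ + h₂, hs₁.add hs₂, ?_⟩
  have hint1 : Integrable (fun p => |f p - h₁ p|) (μ.prod μ) :=
    (hf.sub (hs₁.integrable _)).abs
  have hint2 : Integrable (fun p => |g p - h₂ p|) (μ.prod μ) :=
    (hg.sub (hs₂.integrable _)).abs
  have hmono : ∫ p, |(f + g) p - (h₁ + h₂) p| ∂(μ.prod μ)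
      ≤ ∫ p, (|f p - h₁ p| + |g p - h₂ p|) ∂(μ.prod μ) := by
    refine integral_mono ((hf.add hg).sub ((hs₁.integrable _).add (hs₂.integrable _))).abs
      (hint1.add hint2) fun p => ?_
    simp only [Pi.add_apply]
    calc |f p + g p - (h₁ p + h₂ p)| = |(f p - h₁ p) + (g p - h₂ p)| := by ring_nf
      _ ≤ |f p - h₁ p| + |g p - h₂ p| := abs_add_le _ _
  rw [integral_add hint1 hint2] at hmono
  linarith

lemma approxStruct_simpleFunc (g : SimpleFunc (S × S) ℝ) : ApproxStruct μ ⇑g := by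
  induction g using SimpleFunc.induction with
  | @const c s hs =>
    have hcoe : ⇑(SimpleFunc.piecewise s hs (SimpleFunc.const _ c) (SimpleFunc.const _ 0))
        = s.indicator fun _ => c := by
      funext x
      simp [SimpleFunc.coe_piecewise, SimpleFunc.coe_const, Set.piecewise, Set.indicator_apply]
      rfl
    rw [hcoe]
    exact approxStruct_indicator μ hs c
  | @add f g _ hf hg =>
    rw [SimpleFunc.coe_add]
    exact approxStruct_add μ (f.integrable_of_isFiniteMeasure)
      (g.integrable_of_isFiniteMeasure) hf hg

lemma approxStruct_of_integrable {f : S × S → ℝ} (hf : Integrable f (μ.prod μ)) :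
    ApproxStruct μ f := by
  intro ε hε
  have hmem : MemLp f 1 (μ.prod μ) := memLp_one_iff_integrable.2 hf
  obtain ⟨g, hg, -⟩ := hmem.exists_simpleFunc_eLpNorm_sub_lt ENNReal.one_ne_top
    (ε := ENNReal.ofReal (ε / 2)) (ENNReal.ofReal_pos.2 (by linarith)).ne'
  have hgint : Integrable (⇑g) (μ.prod μ) := g.integrable_of_isFiniteMeasure
  have hfg : ∫ p, |f p - g p| ∂(μ.prod μ) < ε / 2 := by
    have hint : Integrable (f - ⇑g) (μ.prod μ) := hf.sub hgint
    have heq : ∫ p, |f p - g p| ∂(μ.prod μ)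
        = (eLpNorm (f - ⇑g) 1 (μ.prod μ)).toReal := by
      rw [show (fun p => |f p - g p|) = fun p => ‖(f - ⇑g) p‖ from
        funext fun p => (Real.norm_eq_abs _).symm]
      rw [integral_norm_eq_lintegral_enorm hint.1, eLpNorm_one_eq_lintegral_enorm]
    rw [heq]
    have : (eLpNorm (f - ⇑g) 1 (μ.prod μ)).toReal < (ENNReal.ofReal (ε / 2)).toReal := by
      refine ENNReal.toReal_strict_mono ENNReal.ofReal_ne_top hg
    rwa [ENNReal.toReal_ofReal (by linarith)] at this
  obtain ⟨h, hsh, hgh⟩ := approxStruct_simpleFunc μ g (ε / 2) (by linarith)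
  refine ⟨h, hsh, ?_⟩
  have hint1 : Integrable (fun p => |f p - g p|) (μ.prod μ) := (hf.sub hgint).abs
  have hint2 : Integrable (fun p => |(g : (S × S) → ℝ) p - h p|) (μ.prod μ) :=
    (hgint.sub (hsh.integrable _)).abs
  have hmono : ∫ p, |f p - h p| ∂(μ.prod μ)
      ≤ ∫ p, (|f p - g p| + |(g : (S × S) → ℝ) p - h p|) ∂(μ.prod μ) := by
    refine integral_mono (hf.sub (hsh.integrable _)).abs (hint1.add hint2) fun p => ?_
    exact abs_sub_le _ _ _
  rw [integral_add hint1 hint2] at hmono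
  linarith

/-- Main approximation lemma: an integrable kernel can be approximated in `L¹` by a kernel
factoring through a finite measurable partition. -/
lemma exists_finite_factor {W : S → S → ℝ}
    (hW : Integrable (fun p : S × S => W p.1 p.2) (μ.prod μ)) {ε : ℝ} (hε : 0 < ε) :
    ∃ (F : Type) (_ : Fintype F) (c : S → F) (w : F → F → ℝ),
      (∀ i, MeasurableSet (c ⁻¹' {i})) ∧
      ∫ p, |W p.1 p.2 - w (c p.1) (c p.2)| ∂(μ.prod μ) < ε := by
  obtain ⟨h, hsh, hd⟩ := approxStruct_of_integrable μ hW ε hε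
  obtain ⟨F, hF, c, w, hc, rfl⟩ := hsh
  exact ⟨F, hF, c, w, hc, hd⟩

end Approx

section Glue

variable {Ω Ω' F : Type} [MeasurableSpace Ω] [MeasurableSpace Ω'] [Fintype F]

/-- The gluing of two probability spaces along a common finite factor. -/
noncomputable def glueMeasure (ν : Measure Ω) (ν' : Measure Ω') (e : Ω → F) (e' : Ω' → F) :
    Measure (Ω × Ω') :=
  ∑ i ∈ Finset.univ.filter (fun i => ν (e ⁻¹' {i}) ≠ 0),
    (ν (e ⁻¹' {i}))⁻¹ • ((ν.restrict (e ⁻¹' {i})).prod (ν'.restrict (e' ⁻¹' {i})))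

/-- Density of the first marginal of `glueMeasure` restricted to a set `A`. -/
noncomputable def glueDensity (ν : Measure Ω) (ν' : Measure Ω') (e : Ω → F) (e' : Ω' → F)
    (A : Set (Ω × Ω')) : Ω → ℝ≥0∞ :=
  fun ω => ∑ i ∈ Finset.univ.filter (fun i => ν (e ⁻¹' {i}) ≠ 0),
    (e ⁻¹' {i}).indicator
      (fun ω' => (ν (e ⁻¹' {i}))⁻¹ * ν' (Prod.mk ω' ⁻¹' A ∩ e' ⁻¹' {i})) ω

variable (ν : Measure Ω) (ν' : Measure Ω') [IsProbabilityMeasure ν] [IsProbabilityMeasure ν']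
  (e : Ω → F) (e' : Ω' → F)

lemma measurable_glueTerm (he : ∀ i, MeasurableSet (e ⁻¹' {i}))
    (he' : ∀ i, MeasurableSet (e' ⁻¹' {i})) {A : Set (Ω × Ω')} (hA : MeasurableSet A) (i : F) :
    Measurable ((e ⁻¹' {i}).indicator
      (fun ω' => (ν (e ⁻¹' {i}))⁻¹ * ν' (Prod.mk ω' ⁻¹' A ∩ e' ⁻¹' {i}))) := by
  refine Measurable.indicator ?_ (he i)
  have hrw : (fun ω' => ν' (Prod.mk ω' ⁻¹' A ∩ e' ⁻¹' {i}))
      = fun ω' => ν' (Prod.mk ω' ⁻¹' (A ∩ (Set.univ : Set Ω) ×ˢ (e' ⁻¹' {i}))) := by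
    funext ω'; congr 1; ext x; simp
  refine Measurable.const_mul ?_ _
  rw [hrw]
  exact measurable_measure_prodMk_left (hA.inter (MeasurableSet.univ.prod (he' i)))

lemma measurable_glueDensity (he : ∀ i, MeasurableSet (e ⁻¹' {i}))
    (he' : ∀ i, MeasurableSet (e' ⁻¹' {i})) {A : Set (Ω × Ω')} (hA : MeasurableSet A) :
    Measurable (glueDensity ν ν' e e' A) :=
  Finset.measurable_sum _ fun i _ => measurable_glueTerm ν ν' e e' he he' hA i

lemma glueDensity_le_one (hp : ∀ i, ν' (e' ⁻¹' {i}) = ν (e ⁻¹' {i}))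
    (A : Set (Ω × Ω')) (ω : Ω) : glueDensity ν ν' e e' A ω ≤ 1 := by
  classical
  have hzero : ∀ i ∈ Finset.univ.filter (fun i => ν (e ⁻¹' {i}) ≠ 0), i ≠ e ω →
      (e ⁻¹' {i}).indicator
        (fun ω' => (ν (e ⁻¹' {i}))⁻¹ * ν' (Prod.mk ω' ⁻¹' A ∩ e' ⁻¹' {i})) ω = 0 := by
    intro i _ hne
    exact Set.indicator_of_notMem (by simp [hne.symm]) _
  by_cases hmem : e ω ∈ Finset.univ.filter (fun i => ν (e ⁻¹' {i}) ≠ 0)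
  · simp only [glueDensity]
    rw [Finset.sum_eq_single_of_mem (e ω) hmem (fun i hi hne => hzero i hi hne)]
    have hne0 : ν (e ⁻¹' {e ω}) ≠ 0 := by
      have := (Finset.mem_filter.1 hmem).2; simpa using this
    calc (e ⁻¹' {e ω}).indicator
          (fun ω' => (ν (e ⁻¹' {e ω}))⁻¹ * ν' (Prod.mk ω' ⁻¹' A ∩ e' ⁻¹' {e ω})) ω
        ≤ (ν (e ⁻¹' {e ω}))⁻¹ * ν' (Prod.mk ω ⁻¹' A ∩ e' ⁻¹' {e ω}) :=
          Set.indicator_apply_le (fun _ => le_rfl)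
      _ ≤ (ν (e ⁻¹' {e ω}))⁻¹ * ν' (e' ⁻¹' {e ω}) :=
          mul_le_mul_right (measure_mono Set.inter_subset_right) _
      _ = (ν (e ⁻¹' {e ω}))⁻¹ * ν (e ⁻¹' {e ω}) := by rw [hp]
      _ = 1 := ENNReal.inv_mul_cancel hne0 (measure_ne_top _ _)
  · simp only [glueDensity]
    rw [Finset.sum_eq_zero]
    · exact zero_le
    · intro i hi
      rcases eq_or_ne i (e ω) with rfl | hne
      · exact absurd hi hmem
      · exact hzero i hi hne

lemma glueDensity_ne_top (hp : ∀ i, ν' (e' ⁻¹' {i}) = ν (e ⁻¹' {i}))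
    (A : Set (Ω × Ω')) (ω : Ω) : glueDensity ν ν' e e' A ω ≠ ⊤ :=
  ne_top_of_le_ne_top ENNReal.one_ne_top (glueDensity_le_one ν ν' e e' hp A ω)

lemma map_fst_glueMeasure_restrict (he : ∀ i, MeasurableSet (e ⁻¹' {i}))
    (he' : ∀ i, MeasurableSet (e' ⁻¹' {i})) {A : Set (Ω × Ω')} (hA : MeasurableSet A) :
    Measure.map Prod.fst ((glueMeasure ν ν' e e').restrict A)
      = ν.withDensity (glueDensity ν ν' e e' A) := by
  classical
  ext E hE
  rw [Measure.map_apply measurable_fst hE,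
    Measure.restrict_apply (measurable_fst hE),
    withDensity_apply _ hE]
  rw [glueMeasure, Measure.finset_sum_apply]
  have hterm : ∀ i ∈ Finset.univ.filter (fun i => ν (e ⁻¹' {i}) ≠ 0),
      ((ν (e ⁻¹' {i}))⁻¹ • ((ν.restrict (e ⁻¹' {i})).prod (ν'.restrict (e' ⁻¹' {i}))))
          (Prod.fst ⁻¹' E ∩ A)
        = ∫⁻ ω in E, (e ⁻¹' {i}).indicator
            (fun ω' => (ν (e ⁻¹' {i}))⁻¹ * ν' (Prod.mk ω' ⁻¹' A ∩ e' ⁻¹' {i})) ω ∂ν := by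
    intro i hi
    have hne0 : ν (e ⁻¹' {i}) ≠ 0 := by
      have := (Finset.mem_filter.1 hi).2; simpa using this
    rw [Measure.smul_apply, smul_eq_mul,
      Measure.prod_apply ((measurable_fst hE).inter hA)]
    have hpt : (fun ω => (ν'.restrict (e' ⁻¹' {i})) (Prod.mk ω ⁻¹' (Prod.fst ⁻¹' E ∩ A)))
        = fun ω => E.indicator (fun ω' => ν' (Prod.mk ω' ⁻¹' A ∩ e' ⁻¹' {i})) ω := by
      funext ω
      by_cases hω : ω ∈ E
      · have h1 : Prod.mk ω ⁻¹' (Prod.fst ⁻¹' E ∩ A) = Prod.mk ω ⁻¹' A := by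
          ext x; simp [hω]
        rw [h1, Set.indicator_of_mem hω, Measure.restrict_apply' (he' i)]
      · have h1 : Prod.mk ω ⁻¹' (Prod.fst ⁻¹' E ∩ A) = (∅ : Set Ω') := by
          ext x; simp [hω]
        rw [h1, Set.indicator_of_notMem hω, measure_empty]
    have hR : ∫⁻ ω in E, (e ⁻¹' {i}).indicator
          (fun ω' => (ν (e ⁻¹' {i}))⁻¹ * ν' (Prod.mk ω' ⁻¹' A ∩ e' ⁻¹' {i})) ω ∂ν
        = ∫⁻ ω in E ∩ e ⁻¹' {i},
            (ν (e ⁻¹' {i}))⁻¹ * ν' (Prod.mk ω ⁻¹' A ∩ e' ⁻¹' {i}) ∂ν := by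
      rw [lintegral_indicator (he i), Measure.restrict_restrict (he i), Set.inter_comm]
    rw [hpt, lintegral_indicator hE, Measure.restrict_restrict hE,
      ← lintegral_const_mul' _ _ (ENNReal.inv_ne_top.2 hne0), hR]
  rw [Finset.sum_congr rfl hterm,
    ← lintegral_finset_sum _ (fun i _ => measurable_glueTerm ν ν' e e' he he' hA i)]
  rfl

lemma glueDensity_univ_ae (hp : ∀ i, ν' (e' ⁻¹' {i}) = ν (e ⁻¹' {i})) :
    glueDensity ν ν' e e' Set.univ =ᵐ[ν] (fun _ => (1 : ℝ≥0∞)) := by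
  classical
  set N : Set Ω := ⋃ i ∈ Finset.univ.filter (fun i => ν (e ⁻¹' {i}) = 0), e ⁻¹' {i} with hN
  have hNnull : ν N = 0 := by
    refine le_antisymm ?_ zero_le
    refine le_trans (measure_biUnion_finset_le _ _) ?_
    refine le_of_eq (Finset.sum_eq_zero fun i hi => ?_)
    have := (Finset.mem_filter.1 hi).2
    simpa using this
  have hae : ∀ᵐ ω ∂ν, ω ∉ N := by
    rw [ae_iff]
    have : {a | ¬ a ∉ N} = N := by ext a; simp
    rw [this]; exact hNnull
  filter_upwards [hae] with ω hω
  have hne0 : ν (e ⁻¹' {e ω}) ≠ 0 := by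
    intro h0
    exact hω (Set.mem_biUnion (Finset.mem_filter.2 ⟨Finset.mem_univ _, h0⟩) rfl)
  have hmem : e ω ∈ Finset.univ.filter (fun i => ν (e ⁻¹' {i}) ≠ 0) :=
    Finset.mem_filter.2 ⟨Finset.mem_univ _, hne0⟩
  have hzero : ∀ i ∈ Finset.univ.filter (fun i => ν (e ⁻¹' {i}) ≠ 0), i ≠ e ω →
      (e ⁻¹' {i}).indicator
        (fun ω' => (ν (e ⁻¹' {i}))⁻¹ * ν' (Prod.mk ω' ⁻¹' (Set.univ : Set (Ω × Ω')) ∩ e' ⁻¹' {i})) ω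
        = 0 := by
    intro i _ hne
    exact Set.indicator_of_notMem (by simp [hne.symm]) _
  show glueDensity ν ν' e e' Set.univ ω = 1
  simp only [glueDensity]
  rw [Finset.sum_eq_single_of_mem (e ω) hmem (fun i hi hne => hzero i hi hne),
    Set.indicator_of_mem (show ω ∈ e ⁻¹' {e ω} from rfl)]
  have : Prod.mk ω ⁻¹' (Set.univ : Set (Ω × Ω')) ∩ e' ⁻¹' {e ω} = e' ⁻¹' {e ω} := by
    simp
  rw [this, hp, ENNReal.inv_mul_cancel hne0 (measure_ne_top _ _)]

lemma measurePreserving_fst_glue (he : ∀ i, MeasurableSet (e ⁻¹' {i}))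
    (he' : ∀ i, MeasurableSet (e' ⁻¹' {i}))
    (hp : ∀ i, ν' (e' ⁻¹' {i}) = ν (e ⁻¹' {i})) :
    MeasurePreserving Prod.fst (glueMeasure ν ν' e e') ν := by
  refine ⟨measurable_fst, ?_⟩
  have h1 : (glueMeasure ν ν' e e').restrict Set.univ = glueMeasure ν ν' e e' :=
    Measure.restrict_univ
  rw [← h1, map_fst_glueMeasure_restrict ν ν' e e' he he' MeasurableSet.univ,
    withDensity_congr_ae (glueDensity_univ_ae ν ν' e e' hp)]
  show ν.withDensity (fun _ => 1) = ν
  rw [show (fun _ : Ω => (1:ℝ≥0∞)) = (1 : Ω → ℝ≥0∞) from rfl]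
  exact withDensity_one

lemma isProbability_glue (he : ∀ i, MeasurableSet (e ⁻¹' {i}))
    (he' : ∀ i, MeasurableSet (e' ⁻¹' {i}))
    (hp : ∀ i, ν' (e' ⁻¹' {i}) = ν (e ⁻¹' {i})) :
    IsProbabilityMeasure (glueMeasure ν ν' e e') := by
  constructor
  have hmp := (measurePreserving_fst_glue ν ν' e e' he he' hp).map_eq
  have := congrArg (fun m : Measure Ω => m Set.univ) hmp
  beta_reduce at this
  rw [Measure.map_apply measurable_fst MeasurableSet.univ, Set.preimage_univ] at this
  rw [this]
  exact measure_univ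

lemma map_swap_glueMeasure (hp : ∀ i, ν' (e' ⁻¹' {i}) = ν (e ⁻¹' {i})) :
    Measure.map Prod.swap (glueMeasure ν ν' e e') = glueMeasure ν' ν e' e := by
  classical
  ext E hE
  rw [Measure.map_apply measurable_swap hE, glueMeasure, glueMeasure,
    Measure.finset_sum_apply, Measure.finset_sum_apply]
  have hfilter : Finset.univ.filter (fun i => ν' (e' ⁻¹' {i}) ≠ 0)
      = Finset.univ.filter (fun i => ν (e ⁻¹' {i}) ≠ 0) := by
    apply Finset.filter_congr
    intro i _
    simp [hp i]
  rw [hfilter]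
  refine Finset.sum_congr rfl fun i hi => ?_
  rw [Measure.smul_apply, Measure.smul_apply, smul_eq_mul, smul_eq_mul, hp i]
  congr 1
  conv_rhs => rw [← Measure.prod_swap]
  rw [Measure.map_apply measurable_swap hE]

lemma measurePreserving_snd_glue (he : ∀ i, MeasurableSet (e ⁻¹' {i}))
    (he' : ∀ i, MeasurableSet (e' ⁻¹' {i}))
    (hp : ∀ i, ν' (e' ⁻¹' {i}) = ν (e ⁻¹' {i})) :
    MeasurePreserving Prod.snd (glueMeasure ν ν' e e') ν' := by
  have hswap : MeasurePreserving Prod.swap (glueMeasure ν ν' e e') (glueMeasure ν' ν e' e) :=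
    ⟨measurable_swap, map_swap_glueMeasure ν ν' e e' hp⟩
  have hfst := measurePreserving_fst_glue ν' ν e' e he' he (fun i => (hp i).symm)
  have := hfst.comp hswap
  exact this

lemma glue_bad_null (he : ∀ i, MeasurableSet (e ⁻¹' {i}))
    (he' : ∀ i, MeasurableSet (e' ⁻¹' {i})) :
    glueMeasure ν ν' e e' {x : Ω × Ω' | e x.1 ≠ e' x.2} = 0 := by
  classical
  rw [glueMeasure, Measure.finset_sum_apply]
  refine Finset.sum_eq_zero fun i _ => ?_
  rw [Measure.smul_apply, smul_eq_mul, Measure.prod_restrict,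
    Measure.restrict_apply' ((he i).prod (he' i))]
  have hempty : {x : Ω × Ω' | e x.1 ≠ e' x.2} ∩ (e ⁻¹' {i}) ×ˢ (e' ⁻¹' {i}) = ∅ := by
    rw [Set.eq_empty_iff_forall_notMem]
    rintro ⟨a, b⟩ ⟨hbad, ha, hb⟩
    have ha' : e a = i := ha
    have hb' : e' b = i := hb
    exact hbad (ha'.trans hb'.symm)
  rw [hempty, measure_empty, mul_zero]


lemma cutNorm1_map_equiv {X Y : Type} [MeasurableSpace X] [MeasurableSpace Y]
    (φ : X ≃ᵐ Y) (τ : Measure X) [SFinite τ] (f : Y → Y → ℝ) :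
    cutNorm1 (Measure.map φ τ) f = cutNorm1 τ (fun x y => f (φ x) (φ y)) := by
  have hcoe : (Prod.map (⇑φ) (⇑φ)) = ⇑(φ.prodCongr φ) := by
    funext q
    simp [MeasurableEquiv.prodCongr, Prod.map]
  have key : ∀ (A B : Set Y), MeasurableSet A → MeasurableSet B →
      ∫ p in A ×ˢ B, f p.1 p.2 ∂((Measure.map φ τ).prod (Measure.map φ τ))
        = ∫ p in (φ ⁻¹' A) ×ˢ (φ ⁻¹' B), f (φ p.1) (φ p.2) ∂(τ.prod τ) := by
    intro A B hA hB
    have hmm : (Measure.map φ τ).prod (Measure.map φ τ)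
        = Measure.map (φ.prodCongr φ) (τ.prod τ) := by
      rw [Measure.map_prod_map _ _ φ.measurable φ.measurable, hcoe]
    rw [hmm, setIntegral_map_equiv]
    have hpre : (φ.prodCongr φ) ⁻¹' (A ×ˢ B) = (φ ⁻¹' A) ×ˢ (φ ⁻¹' B) := by
      ext q
      simp [MeasurableEquiv.prodCongr, Set.mem_prod]
    rw [hpre]
    rfl
  have hsets : cutSet (Measure.map φ τ) f = cutSet τ (fun x y => f (φ x) (φ y)) := by
    ext r
    constructor
    · rintro ⟨A, B, hA, hB, rfl⟩
      exact ⟨φ ⁻¹' A, φ ⁻¹' B, φ.measurable hA, φ.measurable hB, by rw [key A B hA hB]⟩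
    · rintro ⟨A, B, hA, hB, rfl⟩
      refine ⟨φ.symm ⁻¹' A, φ.symm ⁻¹' B, φ.symm.measurable hA, φ.symm.measurable hB, ?_⟩
      rw [key _ _ (φ.symm.measurable hA) (φ.symm.measurable hB)]
      have h1 : φ ⁻¹' (φ.symm ⁻¹' A) = A := by ext x; simp
      have h2 : φ ⁻¹' (φ.symm ⁻¹' B) = B := by ext x; simp
      rw [h1, h2]
  rw [cutNorm1_def, cutNorm1_def, hsets]

lemma cutNorm1_glue_fst_le (he : ∀ i, MeasurableSet (e ⁻¹' {i}))
    (he' : ∀ i, MeasurableSet (e' ⁻¹' {i}))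
    (hp : ∀ i, ν' (e' ⁻¹' {i}) = ν (e ⁻¹' {i}))
    {g : Ω → Ω → ℝ} (hg : Integrable (fun p : Ω × Ω => g p.1 p.2) (ν.prod ν)) :
    cutNorm1 (glueMeasure ν ν' e e') (fun x y => g x.1 y.1) ≤ cutNorm1 ν g := by
  classical
  haveI hProb : IsProbabilityMeasure (glueMeasure ν ν' e e') :=
    isProbability_glue ν ν' e e' he he' hp
  refine Real.sSup_le ?_ (cutNorm1_nonneg ν g)
  rintro r ⟨A, B, hA, hB, rfl⟩
  show |∫ P in A ×ˢ B, g P.1.1 P.2.1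
      ∂((glueMeasure ν ν' e e').prod (glueMeasure ν ν' e e'))| ≤ cutNorm1 ν g
  haveI hfinA : IsFiniteMeasure (ν.withDensity (glueDensity ν ν' e e' A)) := by
    constructor
    rw [withDensity_apply _ MeasurableSet.univ, Measure.restrict_univ]
    calc ∫⁻ ω, glueDensity ν ν' e e' A ω ∂ν ≤ ∫⁻ _, 1 ∂ν :=
          lintegral_mono (glueDensity_le_one ν ν' e e' hp A)
      _ < ⊤ := by simp [lintegral_one]
  haveI hfinB : IsFiniteMeasure (ν.withDensity (glueDensity ν ν' e e' B)) := by
    constructor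
    rw [withDensity_apply _ MeasurableSet.univ, Measure.restrict_univ]
    calc ∫⁻ ω, glueDensity ν ν' e e' B ω ∂ν ≤ ∫⁻ _, 1 ∂ν :=
          lintegral_mono (glueDensity_le_one ν ν' e e' hp B)
      _ < ⊤ := by simp [lintegral_one]
  have hmapeq : Measure.map (Prod.map Prod.fst Prod.fst)
        (((glueMeasure ν ν' e e').prod (glueMeasure ν ν' e e')).restrict (A ×ˢ B))
      = (ν.withDensity (glueDensity ν ν' e e' A)).prod
          (ν.withDensity (glueDensity ν ν' e e' B)) := by
    rw [← Measure.prod_restrict,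
      ← Measure.map_prod_map _ _ measurable_fst measurable_fst,
      map_fst_glueMeasure_restrict ν ν' e e' he he' hA,
      map_fst_glueMeasure_restrict ν ν' e e' he he' hB]
  have hprodwd : (ν.withDensity (glueDensity ν ν' e e' A)).prod
        (ν.withDensity (glueDensity ν ν' e e' B))
      = (ν.prod ν).withDensity
          (fun z => glueDensity ν ν' e e' A z.1 * glueDensity ν ν' e e' B z.2) := by
    refine Measure.prod_eq fun s t hs ht => ?_
    rw [withDensity_apply _ (hs.prod ht), ← Measure.prod_restrict,
      lintegral_prod_mul ((measurable_glueDensity ν ν' e e' he he' hA).aemeasurable)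
        ((measurable_glueDensity ν ν' e e' he he' hB).aemeasurable),
      withDensity_apply _ hs, withDensity_apply _ ht]
  have hm := hmapeq.trans hprodwd
  have hfm : AEStronglyMeasurable (fun z : Ω × Ω => g z.1 z.2)
      (Measure.map (Prod.map Prod.fst Prod.fst)
        (((glueMeasure ν ν' e e').prod (glueMeasure ν ν' e e')).restrict (A ×ˢ B))) := by
    rw [hm]
    exact AEStronglyMeasurable.mono_ac (withDensity_absolutelyContinuous _ _) hg.1
  have hchg : ∫ z, g z.1 z.2 ∂((ν.prod ν).withDensity
        (fun z => glueDensity ν ν' e e' A z.1 * glueDensity ν ν' e e' B z.2))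
      = ∫ P in A ×ˢ B, g P.1.1 P.2.1
          ∂((glueMeasure ν ν' e e').prod (glueMeasure ν ν' e e')) := by
    rw [← hm, integral_map ((measurable_fst.prodMap measurable_fst).aemeasurable) hfm]
    rfl
  rw [← hchg]
  set f' : Ω × Ω → ℝ≥0 := fun z =>
    (glueDensity ν ν' e e' A z.1).toNNReal * (glueDensity ν ν' e e' B z.2).toNNReal with hf'
  have hwd2 : (ν.prod ν).withDensity
        (fun z => glueDensity ν ν' e e' A z.1 * glueDensity ν ν' e e' B z.2)
      = (ν.prod ν).withDensity (fun z => (f' z : ℝ≥0∞)) := by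
    congr 1
    funext z
    symm
    rw [hf']
    rw [ENNReal.coe_mul, ENNReal.coe_toNNReal (glueDensity_ne_top ν ν' e e' hp A z.1),
      ENNReal.coe_toNNReal (glueDensity_ne_top ν ν' e e' hp B z.2)]
  have hf'meas : Measurable f' :=
    (((measurable_glueDensity ν ν' e e' he he' hA).comp measurable_fst).ennreal_toNNReal).mul
      (((measurable_glueDensity ν ν' e e' he he' hB).comp measurable_snd).ennreal_toNNReal)
  rw [hwd2, integral_withDensity_eq_integral_smul hf'meas]
  have hptw : (fun z : Ω × Ω => f' z • g z.1 z.2)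
      = fun z : Ω × Ω => (glueDensity ν ν' e e' A z.1).toReal
          * (glueDensity ν ν' e e' B z.2).toReal * g z.1 z.2 := by
    funext z
    rw [hf', NNReal.smul_def, smul_eq_mul, NNReal.coe_mul]
    rfl
  rw [hptw]
  have htoR : ∀ (C : Set (Ω × Ω')) (ω : Ω), (glueDensity ν ν' e e' C ω).toReal ≤ 1 := by
    intro C ω
    have := ENNReal.toReal_mono ENNReal.one_ne_top (glueDensity_le_one ν ν' e e' hp C ω)
    simpa using this
  exact abs_integral_mul_mul_le_cutNorm1 ν hg
    ((measurable_glueDensity ν ν' e e' he he' hA).ennreal_toReal)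
    ((measurable_glueDensity ν ν' e e' he he' hB).ennreal_toReal)
    (fun ω => ENNReal.toReal_nonneg) (fun ω => htoR A ω)
    (fun ω => ENNReal.toReal_nonneg) (fun ω => htoR B ω)

lemma cutNorm1_glue_snd_le (he : ∀ i, MeasurableSet (e ⁻¹' {i}))
    (he' : ∀ i, MeasurableSet (e' ⁻¹' {i}))
    (hp : ∀ i, ν' (e' ⁻¹' {i}) = ν (e ⁻¹' {i}))
    {g : Ω' → Ω' → ℝ} (hg : Integrable (fun p : Ω' × Ω' => g p.1 p.2) (ν'.prod ν')) :
    cutNorm1 (glueMeasure ν ν' e e') (fun x y => g x.2 y.2) ≤ cutNorm1 ν' g := by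
  haveI hProb : IsProbabilityMeasure (glueMeasure ν ν' e e') :=
    isProbability_glue ν ν' e e' he he' hp
  have hswap : Measure.map (⇑(MeasurableEquiv.prodComm : Ω × Ω' ≃ᵐ Ω' × Ω))
      (glueMeasure ν ν' e e') = glueMeasure ν' ν e' e := by
    have hco : (⇑(MeasurableEquiv.prodComm : Ω × Ω' ≃ᵐ Ω' × Ω)) = Prod.swap := rfl
    rw [hco]
    exact map_swap_glueMeasure ν ν' e e' hp
  have hkey := cutNorm1_map_equiv (MeasurableEquiv.prodComm : Ω × Ω' ≃ᵐ Ω' × Ω)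
    (glueMeasure ν ν' e e') (fun x y => g x.1 y.1)
  rw [hswap] at hkey
  have hshape : (fun (x y : Ω × Ω') =>
        g (((MeasurableEquiv.prodComm : Ω × Ω' ≃ᵐ Ω' × Ω) x).1)
          (((MeasurableEquiv.prodComm : Ω × Ω' ≃ᵐ Ω' × Ω) y).1))
      = fun (x y : Ω × Ω') => g x.2 y.2 := rfl
  rw [hshape] at hkey
  rw [← hkey]
  exact cutNorm1_glue_fst_le ν' ν e' e he' he (fun i => (hp i).symm) hg

end Glue

section Coup

variable {S₁ S₂ : Type} [MeasurableSpace S₁] [MeasurableSpace S₂]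

def coupSet (μ₁ : Measure S₁) (μ₂ : Measure S₂) (W₁ : S₁ → S₁ → ℝ) (W₂ : S₂ → S₂ → ℝ) :
    Set ℝ :=
  {r : ℝ | ∃ (Ω : Type) (_ : MeasurableSpace Ω) (ν : Measure Ω),
    IsProbabilityMeasure ν ∧ ∃ (φ₁ : Ω → S₁) (φ₂ : Ω → S₂),
      MeasurePreserving φ₁ ν μ₁ ∧ MeasurePreserving φ₂ ν μ₂ ∧
      r = cutNorm1 ν (fun x y => W₁ (φ₁ x) (φ₁ y) - W₂ (φ₂ x) (φ₂ y))}

lemma coupSet_nonneg (μ₁ : Measure S₁) (μ₂ : Measure S₂) (W₁ : S₁ → S₁ → ℝ)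
    (W₂ : S₂ → S₂ → ℝ) : ∀ r ∈ coupSet μ₁ μ₂ W₁ W₂, 0 ≤ r := by
  rintro r ⟨Ω, mΩ, ν, hν, φ₁, φ₂, h1, h2, rfl⟩
  exact cutNorm1_nonneg ν _

lemma coupSet_bddBelow (μ₁ : Measure S₁) (μ₂ : Measure S₂) (W₁ : S₁ → S₁ → ℝ)
    (W₂ : S₂ → S₂ → ℝ) : BddBelow (coupSet μ₁ μ₂ W₁ W₂) :=
  ⟨0, fun r hr => coupSet_nonneg μ₁ μ₂ W₁ W₂ r hr⟩

lemma coupSet_nonempty (μ₁ : Measure S₁) (μ₂ : Measure S₂)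
    [IsProbabilityMeasure μ₁] [IsProbabilityMeasure μ₂]
    (W₁ : S₁ → S₁ → ℝ) (W₂ : S₂ → S₂ → ℝ) : (coupSet μ₁ μ₂ W₁ W₂).Nonempty := by
  refine ⟨_, S₁ × S₂, inferInstance, μ₁.prod μ₂, inferInstance, Prod.fst, Prod.snd, ?_, ?_, rfl⟩
  · exact ⟨measurable_fst, by rw [Measure.map_fst_prod]; simp⟩
  · exact ⟨measurable_snd, by rw [Measure.map_snd_prod]; simp⟩

end Coup
end CutTriangle

/-- The cut metric: the infimum over all couplings (pairs of measure-preserving maps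
from a common probability space) of the cut norm of the difference of the pull-backs. -/
noncomputable def cutDist {S₁ S₂ : Type} [MeasurableSpace S₁] [MeasurableSpace S₂]
    (μ₁ : Measure S₁) (μ₂ : Measure S₂)
    (W₁ : S₁ → S₁ → ℝ) (W₂ : S₂ → S₂ → ℝ) : ℝ :=
  sInf {r : ℝ | ∃ (Ω : Type) (_ : MeasurableSpace Ω) (ν : Measure Ω),
    IsProbabilityMeasure ν ∧ ∃ (φ₁ : Ω → S₁) (φ₂ : Ω → S₂),
      MeasurePreserving φ₁ ν μ₁ ∧ MeasurePreserving φ₂ ν μ₂ ∧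
      r = cutNorm1 ν (fun x y => W₁ (φ₁ x) (φ₁ y) - W₂ (φ₂ x) (φ₂ y))}

lemma cutDist_def {S₁ S₂ : Type} [MeasurableSpace S₁] [MeasurableSpace S₂]
    (μ₁ : Measure S₁) (μ₂ : Measure S₂) (W₁ : S₁ → S₁ → ℝ) (W₂ : S₂ → S₂ → ℝ) :
    cutDist μ₁ μ₂ W₁ W₂ = sInf (CutTriangle.coupSet μ₁ μ₂ W₁ W₂) := rfl

/-- The cut metric satisfies the triangle inequality. -/
theorem cutDist_triangle {S₁ S₂ S₃ : Type}
    [MeasurableSpace S₁] [MeasurableSpace S₂] [MeasurableSpace S₃]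
    (μ₁ : Measure S₁) (μ₂ : Measure S₂) (μ₃ : Measure S₃)
    [IsProbabilityMeasure μ₁] [IsProbabilityMeasure μ₂] [IsProbabilityMeasure μ₃]
    (W₁ : S₁ → S₁ → ℝ) (W₂ : S₂ → S₂ → ℝ) (W₃ : S₃ → S₃ → ℝ)
    (hW₁ : Integrable (fun p : S₁ × S₁ => W₁ p.1 p.2) (μ₁.prod μ₁))
    (hW₂ : Integrable (fun p : S₂ × S₂ => W₂ p.1 p.2) (μ₂.prod μ₂))
    (hW₃ : Integrable (fun p : S₃ × S₃ => W₃ p.1 p.2) (μ₃.prod μ₃)) :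
    cutDist μ₁ μ₃ W₁ W₃ ≤ cutDist μ₁ μ₂ W₁ W₂ + cutDist μ₂ μ₃ W₂ W₃ := by
  classical
  open CutTriangle in
  refine le_of_forall_pos_le_add fun ε hε => ?_
  have hε4 : 0 < ε / 4 := by linarith
  -- extract the first coupling
  obtain ⟨r12, hr12mem, hr12⟩ := exists_lt_of_csInf_lt
    (CutTriangle.coupSet_nonempty μ₁ μ₂ W₁ W₂)
    (show sInf (CutTriangle.coupSet μ₁ μ₂ W₁ W₂)
      < sInf (CutTriangle.coupSet μ₁ μ₂ W₁ W₂) + ε / 4 from lt_add_of_pos_right _ hε4)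
  obtain ⟨Ω, mΩ, ν, hν, φ₁, φ₂, hφ₁, hφ₂, rfl⟩ := hr12mem
  -- extract the second coupling
  obtain ⟨r23, hr23mem, hr23⟩ := exists_lt_of_csInf_lt
    (CutTriangle.coupSet_nonempty μ₂ μ₃ W₂ W₃)
    (show sInf (CutTriangle.coupSet μ₂ μ₃ W₂ W₃)
      < sInf (CutTriangle.coupSet μ₂ μ₃ W₂ W₃) + ε / 4 from lt_add_of_pos_right _ hε4)
  obtain ⟨Ω', mΩ', ν', hν', ψ₂, ψ₃, hψ₂, hψ₃, rfl⟩ := hr23mem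
  letI := mΩ
  letI := mΩ'
  haveI := hν
  haveI := hν'
  -- finite factor approximation of W₂
  obtain ⟨F, hF, c, w, hc, happ⟩ := CutTriangle.exists_finite_factor μ₂ hW₂ hε4
  letI := hF
  -- the two factor maps
  have he : ∀ i, MeasurableSet ((fun ω => c (φ₂ ω)) ⁻¹' {i}) :=
    fun i => hφ₂.measurable (hc i)
  have he' : ∀ i, MeasurableSet ((fun ω => c (ψ₂ ω)) ⁻¹' {i}) :=
    fun i => hψ₂.measurable (hc i)
  have hp : ∀ i, ν' ((fun ω => c (ψ₂ ω)) ⁻¹' {i}) = ν ((fun ω => c (φ₂ ω)) ⁻¹' {i}) := by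
    intro i
    have h1 : ν' ((fun ω => c (ψ₂ ω)) ⁻¹' {i}) = μ₂ (c ⁻¹' {i}) :=
      hψ₂.measure_preimage (hc i).nullMeasurableSet
    have h2 : ν ((fun ω => c (φ₂ ω)) ⁻¹' {i}) = μ₂ (c ⁻¹' {i}) :=
      hφ₂.measure_preimage (hc i).nullMeasurableSet
    rw [h1, h2]
  -- the glued coupling
  haveI hρ : IsProbabilityMeasure
      (CutTriangle.glueMeasure ν ν' (fun ω => c (φ₂ ω)) (fun ω => c (ψ₂ ω))) :=
    CutTriangle.isProbability_glue ν ν' _ _ he he' hp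
  have hmpfst := CutTriangle.measurePreserving_fst_glue ν ν'
    (fun ω => c (φ₂ ω)) (fun ω => c (ψ₂ ω)) he he' hp
  have hmpsnd := CutTriangle.measurePreserving_snd_glue ν ν'
    (fun ω => c (φ₂ ω)) (fun ω => c (ψ₂ ω)) he he' hp
  set ρ := CutTriangle.glueMeasure ν ν' (fun ω => c (φ₂ ω)) (fun ω => c (ψ₂ ω)) with hρdef
  -- membership of the glued coupling in the (1,3) coupling set
  have hmem13 : cutNorm1 ρ (fun x y => W₁ (φ₁ x.1) (φ₁ y.1) - W₃ (ψ₃ x.2) (ψ₃ y.2))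
      ∈ CutTriangle.coupSet μ₁ μ₃ W₁ W₃ :=
    ⟨Ω × Ω', inferInstance, ρ, hρ, fun x => φ₁ x.1, fun x => ψ₃ x.2,
      hφ₁.comp hmpfst, hψ₃.comp hmpsnd, rfl⟩
  have hd13 : cutDist μ₁ μ₃ W₁ W₃
      ≤ cutNorm1 ρ (fun x y => W₁ (φ₁ x.1) (φ₁ y.1) - W₃ (ψ₃ x.2) (ψ₃ y.2)) :=
    csInf_le (CutTriangle.coupSet_bddBelow μ₁ μ₃ W₁ W₃) hmem13
  -- integrability facts
  have hsν : Integrable (fun q : Ω × Ω => w (c (φ₂ q.1)) (c (φ₂ q.2))) (ν.prod ν) :=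
    CutTriangle.IsStruct.integrable
      ⟨F, hF, fun ω => c (φ₂ ω), w, he, rfl⟩ _
  have hsν' : Integrable (fun q : Ω' × Ω' => w (c (ψ₂ q.1)) (c (ψ₂ q.2))) (ν'.prod ν') :=
    CutTriangle.IsStruct.integrable
      ⟨F, hF, fun ω => c (ψ₂ ω), w, he', rfl⟩ _
  have hW1ν : Integrable (fun q : Ω × Ω => W₁ (φ₁ q.1) (φ₁ q.2)) (ν.prod ν) :=
    ((hφ₁.prod hφ₁).integrable_comp hW₁.1).2 hW₁
  have hW2ν : Integrable (fun q : Ω × Ω => W₂ (φ₂ q.1) (φ₂ q.2)) (ν.prod ν) :=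
    ((hφ₂.prod hφ₂).integrable_comp hW₂.1).2 hW₂
  have hW2ν' : Integrable (fun q : Ω' × Ω' => W₂ (ψ₂ q.1) (ψ₂ q.2)) (ν'.prod ν') :=
    ((hψ₂.prod hψ₂).integrable_comp hW₂.1).2 hW₂
  have hW3ν' : Integrable (fun q : Ω' × Ω' => W₃ (ψ₃ q.1) (ψ₃ q.2)) (ν'.prod ν') :=
    ((hψ₃.prod hψ₃).integrable_comp hW₃.1).2 hW₃
  have hmpfst2 : MeasurePreserving (Prod.map Prod.fst Prod.fst) (ρ.prod ρ) (ν.prod ν) :=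
    hmpfst.prod hmpfst
  have hmpsnd2 : MeasurePreserving (Prod.map Prod.snd Prod.snd) (ρ.prod ρ) (ν'.prod ν') :=
    hmpsnd.prod hmpsnd
  have hI1 : Integrable (fun p : (Ω × Ω') × (Ω × Ω') =>
      W₁ (φ₁ p.1.1) (φ₁ p.2.1) - w (c (φ₂ p.1.1)) (c (φ₂ p.2.1))) (ρ.prod ρ) := by
    have h0 : Integrable (fun q : Ω × Ω =>
        W₁ (φ₁ q.1) (φ₁ q.2) - w (c (φ₂ q.1)) (c (φ₂ q.2))) (ν.prod ν) := hW1ν.sub hsν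
    exact (hmpfst2.integrable_comp h0.1).2 h0
  have hI2 : Integrable (fun p : (Ω × Ω') × (Ω × Ω') =>
      w (c (φ₂ p.1.1)) (c (φ₂ p.2.1)) - W₃ (ψ₃ p.1.2) (ψ₃ p.2.2)) (ρ.prod ρ) := by
    have hMρ : Integrable (fun p : (Ω × Ω') × (Ω × Ω') =>
        w (c (φ₂ p.1.1)) (c (φ₂ p.2.1))) (ρ.prod ρ) :=
      (hmpfst2.integrable_comp hsν.1).2 hsν
    have hW3ρ : Integrable (fun p : (Ω × Ω') × (Ω × Ω') =>
        W₃ (ψ₃ p.1.2) (ψ₃ p.2.2)) (ρ.prod ρ) :=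
      (hmpsnd2.integrable_comp hW3ν'.1).2 hW3ν'
    exact hMρ.sub hW3ρ
  -- a.e. identification of the two middle functions on the glued space
  have hmid : cutNorm1 ρ (fun x y => w (c (φ₂ x.1)) (c (φ₂ y.1)) - W₃ (ψ₃ x.2) (ψ₃ y.2))
      = cutNorm1 ρ (fun x y => w (c (ψ₂ x.2)) (c (ψ₂ y.2)) - W₃ (ψ₃ x.2) (ψ₃ y.2)) := by
    apply CutTriangle.cutNorm1_congr_ae
    set N : Set (Ω × Ω') := {x | c (φ₂ x.1) ≠ c (ψ₂ x.2)} with hNdef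
    have hNnull : ρ N = 0 := CutTriangle.glue_bad_null ν ν' _ _ he he'
    have hae2 : ∀ᵐ P ∂(ρ.prod ρ), P ∈ (Nᶜ ×ˢ Nᶜ : Set ((Ω × Ω') × (Ω × Ω'))) := by
      rw [ae_iff]
      refine measure_mono_null
        (t := (N ×ˢ (Set.univ : Set (Ω × Ω'))) ∪ ((Set.univ : Set (Ω × Ω')) ×ˢ N))
        (fun P hP => ?_) ?_
      · show P ∈ (N ×ˢ (Set.univ : Set (Ω × Ω'))) ∪ ((Set.univ : Set (Ω × Ω')) ×ˢ N)
        simp only [Set.mem_setOf_eq, Set.mem_prod, Set.mem_compl_iff, not_and_or,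
          not_not] at hP
        rcases hP with h | h
        · exact Or.inl ⟨by simpa using h, Set.mem_univ _⟩
        · exact Or.inr ⟨Set.mem_univ _, by simpa using h⟩
      · refine measure_union_null ?_ ?_
        · rw [Measure.prod_prod, hNnull, zero_mul]
        · rw [Measure.prod_prod, hNnull, mul_zero]
    filter_upwards [hae2] with P hP
    obtain ⟨h1, h2⟩ := hP
    have h1' : c (φ₂ P.1.1) = c (ψ₂ P.1.2) := not_not.1 h1
    have h2' : c (φ₂ P.2.1) = c (ψ₂ P.2.2) := not_not.1 h2
    show w (c (φ₂ P.1.1)) (c (φ₂ P.2.1)) - W₃ (ψ₃ P.1.2) (ψ₃ P.2.2)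
        = w (c (ψ₂ P.1.2)) (c (ψ₂ P.2.2)) - W₃ (ψ₃ P.1.2) (ψ₃ P.2.2)
    rw [h1', h2']
  -- change-of-variable computations for the L¹ error terms
  have hcov1 : ∫ q, |W₂ (φ₂ q.1) (φ₂ q.2) - w (c (φ₂ q.1)) (c (φ₂ q.2))| ∂(ν.prod ν)
      = ∫ p, |W₂ p.1 p.2 - w (c p.1) (c p.2)| ∂(μ₂.prod μ₂) := by
    have hmp2 : MeasurePreserving (Prod.map φ₂ φ₂) (ν.prod ν) (μ₂.prod μ₂) := hφ₂.prod hφ₂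
    have hint : Integrable (fun p : S₂ × S₂ => W₂ p.1 p.2 - w (c p.1) (c p.2)) (μ₂.prod μ₂) :=
      hW₂.sub (CutTriangle.IsStruct.integrable ⟨F, hF, c, w, hc, rfl⟩ _)
    rw [← hmp2.map_eq, integral_map hmp2.measurable.aemeasurable]
    · rfl
    · rw [hmp2.map_eq]
      exact hint.abs.1
  have hcov2 : ∫ q, |W₂ (ψ₂ q.1) (ψ₂ q.2) - w (c (ψ₂ q.1)) (c (ψ₂ q.2))| ∂(ν'.prod ν')
      = ∫ p, |W₂ p.1 p.2 - w (c p.1) (c p.2)| ∂(μ₂.prod μ₂) := by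
    have hmp2 : MeasurePreserving (Prod.map ψ₂ ψ₂) (ν'.prod ν') (μ₂.prod μ₂) := hψ₂.prod hψ₂
    have hint : Integrable (fun p : S₂ × S₂ => W₂ p.1 p.2 - w (c p.1) (c p.2)) (μ₂.prod μ₂) :=
      hW₂.sub (CutTriangle.IsStruct.integrable ⟨F, hF, c, w, hc, rfl⟩ _)
    rw [← hmp2.map_eq, integral_map hmp2.measurable.aemeasurable]
    · rfl
    · rw [hmp2.map_eq]
      exact hint.abs.1
  -- bound the first half
  have hhalf1 : cutNorm1 ρ (fun x y => W₁ (φ₁ x.1) (φ₁ y.1)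
        - w (c (φ₂ x.1)) (c (φ₂ y.1)))
      < cutDist μ₁ μ₂ W₁ W₂ + ε / 4 + ε / 4 := by
    have hstep1 : cutNorm1 ρ (fun x y => W₁ (φ₁ x.1) (φ₁ y.1) - w (c (φ₂ x.1)) (c (φ₂ y.1)))
        ≤ cutNorm1 ν (fun a b => W₁ (φ₁ a) (φ₁ b) - w (c (φ₂ a)) (c (φ₂ b))) :=
      CutTriangle.cutNorm1_glue_fst_le ν ν' _ _ he he' hp
        (g := fun a b => W₁ (φ₁ a) (φ₁ b) - w (c (φ₂ a)) (c (φ₂ b))) (hW1ν.sub hsν)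
    have hsplit : (fun (a b : Ω) => W₁ (φ₁ a) (φ₁ b) - w (c (φ₂ a)) (c (φ₂ b)))
        = fun a b => (W₁ (φ₁ a) (φ₁ b) - W₂ (φ₂ a) (φ₂ b))
          + (W₂ (φ₂ a) (φ₂ b) - w (c (φ₂ a)) (c (φ₂ b))) := by
      funext a b; ring
    have hstep2 : cutNorm1 ν (fun a b => W₁ (φ₁ a) (φ₁ b) - w (c (φ₂ a)) (c (φ₂ b)))
        ≤ cutNorm1 ν (fun a b => W₁ (φ₁ a) (φ₁ b) - W₂ (φ₂ a) (φ₂ b))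
          + cutNorm1 ν (fun a b => W₂ (φ₂ a) (φ₂ b) - w (c (φ₂ a)) (c (φ₂ b))) := by
      rw [hsplit]
      exact CutTriangle.cutNorm1_add_le ν (hW1ν.sub hW2ν) (hW2ν.sub hsν)
    have hstep3 : cutNorm1 ν (fun a b => W₂ (φ₂ a) (φ₂ b) - w (c (φ₂ a)) (c (φ₂ b)))
        ≤ ∫ q, |W₂ (φ₂ q.1) (φ₂ q.2) - w (c (φ₂ q.1)) (c (φ₂ q.2))| ∂(ν.prod ν) :=
      CutTriangle.cutNorm1_le_integral ν (hW2ν.sub hsν)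
    have hstep4 : ∫ q, |W₂ (φ₂ q.1) (φ₂ q.2) - w (c (φ₂ q.1)) (c (φ₂ q.2))| ∂(ν.prod ν)
        < ε / 4 := by rw [hcov1]; exact happ
    calc cutNorm1 ρ (fun x y => W₁ (φ₁ x.1) (φ₁ y.1) - w (c (φ₂ x.1)) (c (φ₂ y.1)))
        ≤ _ := hstep1
      _ ≤ _ := hstep2
      _ < cutDist μ₁ μ₂ W₁ W₂ + ε / 4 + ε / 4 := by
          have := hr12
          rw [cutDist_def]
          linarith
  -- bound the second half
  have hhalf2 : cutNorm1 ρ (fun x y => w (c (φ₂ x.1)) (c (φ₂ y.1)) - W₃ (ψ₃ x.2) (ψ₃ y.2))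
      < cutDist μ₂ μ₃ W₂ W₃ + ε / 4 + ε / 4 := by
    rw [hmid]
    have hstep1 : cutNorm1 ρ (fun x y => w (c (ψ₂ x.2)) (c (ψ₂ y.2)) - W₃ (ψ₃ x.2) (ψ₃ y.2))
        ≤ cutNorm1 ν' (fun a b => w (c (ψ₂ a)) (c (ψ₂ b)) - W₃ (ψ₃ a) (ψ₃ b)) :=
      CutTriangle.cutNorm1_glue_snd_le ν ν' _ _ he he' hp
        (g := fun a b => w (c (ψ₂ a)) (c (ψ₂ b)) - W₃ (ψ₃ a) (ψ₃ b)) (hsν'.sub hW3ν')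
    have hsplit : (fun (a b : Ω') => w (c (ψ₂ a)) (c (ψ₂ b)) - W₃ (ψ₃ a) (ψ₃ b))
        = fun a b => (w (c (ψ₂ a)) (c (ψ₂ b)) - W₂ (ψ₂ a) (ψ₂ b))
          + (W₂ (ψ₂ a) (ψ₂ b) - W₃ (ψ₃ a) (ψ₃ b)) := by
      funext a b; ring
    have hstep2 : cutNorm1 ν' (fun a b => w (c (ψ₂ a)) (c (ψ₂ b)) - W₃ (ψ₃ a) (ψ₃ b))
        ≤ cutNorm1 ν' (fun a b => w (c (ψ₂ a)) (c (ψ₂ b)) - W₂ (ψ₂ a) (ψ₂ b))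
          + cutNorm1 ν' (fun a b => W₂ (ψ₂ a) (ψ₂ b) - W₃ (ψ₃ a) (ψ₃ b)) := by
      rw [hsplit]
      exact CutTriangle.cutNorm1_add_le ν' (hsν'.sub hW2ν') (hW2ν'.sub hW3ν')
    have hstep3 : cutNorm1 ν' (fun a b => w (c (ψ₂ a)) (c (ψ₂ b)) - W₂ (ψ₂ a) (ψ₂ b))
        ≤ ∫ q, |w (c (ψ₂ q.1)) (c (ψ₂ q.2)) - W₂ (ψ₂ q.1) (ψ₂ q.2)| ∂(ν'.prod ν') :=
      CutTriangle.cutNorm1_le_integral ν' (hsν'.sub hW2ν')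
    have hstep4 : ∫ q, |w (c (ψ₂ q.1)) (c (ψ₂ q.2)) - W₂ (ψ₂ q.1) (ψ₂ q.2)| ∂(ν'.prod ν')
        < ε / 4 := by
      have habs : (fun q : Ω' × Ω' => |w (c (ψ₂ q.1)) (c (ψ₂ q.2)) - W₂ (ψ₂ q.1) (ψ₂ q.2)|)
          = fun q : Ω' × Ω' => |W₂ (ψ₂ q.1) (ψ₂ q.2) - w (c (ψ₂ q.1)) (c (ψ₂ q.2))| := by
        funext q; rw [abs_sub_comm]
      rw [habs, hcov2]
      exact happ
    calc cutNorm1 ρ (fun x y => w (c (ψ₂ x.2)) (c (ψ₂ y.2)) - W₃ (ψ₃ x.2) (ψ₃ y.2))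
        ≤ _ := hstep1
      _ ≤ _ := hstep2
      _ < cutDist μ₂ μ₃ W₂ W₃ + ε / 4 + ε / 4 := by
          have := hr23
          rw [cutDist_def]
          linarith
  -- assemble
  have hfun : (fun (x y : Ω × Ω') => W₁ (φ₁ x.1) (φ₁ y.1) - W₃ (ψ₃ x.2) (ψ₃ y.2))
      = fun x y => (W₁ (φ₁ x.1) (φ₁ y.1) - w (c (φ₂ x.1)) (c (φ₂ y.1)))
        + (w (c (φ₂ x.1)) (c (φ₂ y.1)) - W₃ (ψ₃ x.2) (ψ₃ y.2)) := by
    funext x y; ring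
  have hsum : cutNorm1 ρ (fun x y => W₁ (φ₁ x.1) (φ₁ y.1) - W₃ (ψ₃ x.2) (ψ₃ y.2))
      ≤ cutNorm1 ρ (fun x y => W₁ (φ₁ x.1) (φ₁ y.1) - w (c (φ₂ x.1)) (c (φ₂ y.1)))
        + cutNorm1 ρ (fun x y => w (c (φ₂ x.1)) (c (φ₂ y.1)) - W₃ (ψ₃ x.2) (ψ₃ y.2)) := by
    rw [hfun]
    exact CutTriangle.cutNorm1_add_le ρ hI1 hI2
  have := hd13.trans hsum
  linarith
end

section
/- In the definition of the cut metric, it suffices to consider couplings given by the two projections from the product space: δ_□(W₁,W₂) equals the infimum over probability measures μ on S₁×S₂ with marginals μ₁ and μ₂ of the cut norm of W₁^{π₁} − W₂^{π₂} on (S₁×S₂, μ). -/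
open MeasureTheory

lemma zero_mem_cutNormSet {S : Type} [MeasurableSpace S] (μ : Measure S) (W : S → S → ℝ) :
    (0:ℝ) ∈ {r : ℝ | ∃ A B : Set S, MeasurableSet A ∧ MeasurableSet B ∧
      r = |∫ p in A ×ˢ B, W p.1 p.2 ∂(μ.prod μ)|} :=
  ⟨∅, ∅, MeasurableSet.empty, MeasurableSet.empty, by simp⟩

lemma bddAbove_cutNormSet {S : Type} [MeasurableSpace S] (μ : Measure S) (W : S → S → ℝ)
    (hW : Integrable (fun p : S × S => W p.1 p.2) (μ.prod μ)) :
    BddAbove {r : ℝ | ∃ A B : Set S, MeasurableSet A ∧ MeasurableSet B ∧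
      r = |∫ p in A ×ˢ B, W p.1 p.2 ∂(μ.prod μ)|} := by
  refine ⟨∫ p, |W p.1 p.2| ∂(μ.prod μ), ?_⟩
  rintro r ⟨A, B, hA, hB, rfl⟩
  calc |∫ p in A ×ˢ B, W p.1 p.2 ∂(μ.prod μ)|
      ≤ ∫ p in A ×ˢ B, |W p.1 p.2| ∂(μ.prod μ) := by
        simpa [Real.norm_eq_abs] using
          norm_integral_le_integral_norm (μ := (μ.prod μ).restrict (A ×ˢ B))
            (fun p : S × S => W p.1 p.2)
    _ ≤ ∫ p, |W p.1 p.2| ∂(μ.prod μ) :=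
        setIntegral_le_integral hW.abs (Filter.Eventually.of_forall fun _ => abs_nonneg _)

lemma cutNorm1_nonneg {S : Type} [MeasurableSpace S] (μ : Measure S) (W : S → S → ℝ)
    (hW : Integrable (fun p : S × S => W p.1 p.2) (μ.prod μ)) :
    0 ≤ cutNorm1 μ W :=
  le_csSup (bddAbove_cutNormSet μ W hW) (zero_mem_cutNormSet μ W)

lemma cutNorm1_map_le {T Ω : Type} [MeasurableSpace T] [MeasurableSpace Ω]
    (ν : Measure Ω) (μ : Measure T) [IsProbabilityMeasure ν] [IsProbabilityMeasure μ]
    (φ : Ω → T) (hφ : MeasurePreserving φ ν μ)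
    (W : T → T → ℝ) (hW : Integrable (fun p : T × T => W p.1 p.2) (μ.prod μ)) :
    cutNorm1 μ W ≤ cutNorm1 ν (fun x y => W (φ x) (φ y)) := by
  have hmp : MeasurePreserving (Prod.map φ φ) (ν.prod ν) (μ.prod μ) := hφ.prod hφ
  have hWν : Integrable (fun p : Ω × Ω => W (φ p.1) (φ p.2)) (ν.prod ν) :=
    (hmp.integrable_comp hW.aestronglyMeasurable).2 hW
  refine csSup_le_csSup (bddAbove_cutNormSet ν (fun x y => W (φ x) (φ y)) hWν)
    ⟨0, zero_mem_cutNormSet μ W⟩ ?_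
  rintro r ⟨A, B, hA, hB, rfl⟩
  refine ⟨φ ⁻¹' A, φ ⁻¹' B, hφ.measurable hA, hφ.measurable hB, ?_⟩
  have h1 : ∫ p in A ×ˢ B, W p.1 p.2 ∂(μ.prod μ)
      = ∫ x in (Prod.map φ φ) ⁻¹' (A ×ˢ B), W (φ x.1) (φ x.2) ∂(ν.prod ν) := by
    rw [← hmp.map_eq]
    exact setIntegral_map (hA.prod hB)
      (by rw [hmp.map_eq]; exact hW.aestronglyMeasurable) hmp.measurable.aemeasurable
  have h2 : (Prod.map φ φ) ⁻¹' (A ×ˢ B) = (φ ⁻¹' A) ×ˢ (φ ⁻¹' B) := by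
    ext p; simp [Prod.map]
  rw [h1, h2]

lemma integrable_diff {S₁ S₂ : Type} [MeasurableSpace S₁] [MeasurableSpace S₂]
    {μ₁ : Measure S₁} {μ₂ : Measure S₂}
    {W₁ : S₁ → S₁ → ℝ} {W₂ : S₂ → S₂ → ℝ}
    (hW₁ : Integrable (fun p : S₁ × S₁ => W₁ p.1 p.2) (μ₁.prod μ₁))
    (hW₂ : Integrable (fun p : S₂ × S₂ => W₂ p.1 p.2) (μ₂.prod μ₂))
    (μ : Measure (S₁ × S₂)) [IsProbabilityMeasure μ]
    [IsProbabilityMeasure μ₁] [IsProbabilityMeasure μ₂]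
    (h1 : μ.map Prod.fst = μ₁) (h2 : μ.map Prod.snd = μ₂) :
    Integrable (fun p : (S₁ × S₂) × (S₁ × S₂) =>
      W₁ p.1.1 p.2.1 - W₂ p.1.2 p.2.2) (μ.prod μ) := by
  have m1 : MeasurePreserving (Prod.fst : S₁ × S₂ → S₁) μ μ₁ := ⟨measurable_fst, h1⟩
  have m2 : MeasurePreserving (Prod.snd : S₁ × S₂ → S₂) μ μ₂ := ⟨measurable_snd, h2⟩
  have i1 : Integrable (fun p : (S₁ × S₂) × (S₁ × S₂) => W₁ p.1.1 p.2.1) (μ.prod μ) :=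
    ((m1.prod m1).integrable_comp hW₁.aestronglyMeasurable).2 hW₁
  have i2 : Integrable (fun p : (S₁ × S₂) × (S₁ × S₂) => W₂ p.1.2 p.2.2) (μ.prod μ) :=
    ((m2.prod m2).integrable_comp hW₂.aestronglyMeasurable).2 hW₂
  exact i1.sub i2


/-- In the definition of the cut metric it suffices to consider couplings given by
the two coordinate projections from the product space equipped with a probability
measure having the prescribed marginals. -/
theorem cutDist_eq_inf_over_product_couplings {S₁ S₂ : Type}
    [MeasurableSpace S₁] [MeasurableSpace S₂]
    (μ₁ : Measure S₁) (μ₂ : Measure S₂)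
    [IsProbabilityMeasure μ₁] [IsProbabilityMeasure μ₂]
    (W₁ : S₁ → S₁ → ℝ) (W₂ : S₂ → S₂ → ℝ)
    (hW₁ : Integrable (fun p : S₁ × S₁ => W₁ p.1 p.2) (μ₁.prod μ₁))
    (hW₂ : Integrable (fun p : S₂ × S₂ => W₂ p.1 p.2) (μ₂.prod μ₂)) :
    cutDist μ₁ μ₂ W₁ W₂ =
      sInf {r : ℝ | ∃ μ : Measure (S₁ × S₂), IsProbabilityMeasure μ ∧
        μ.map Prod.fst = μ₁ ∧ μ.map Prod.snd = μ₂ ∧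
        r = cutNorm1 μ (fun p q => W₁ p.1 q.1 - W₂ p.2 q.2)} := by
  have hRHS_nonempty : {r : ℝ | ∃ μ : Measure (S₁ × S₂), IsProbabilityMeasure μ ∧
      μ.map Prod.fst = μ₁ ∧ μ.map Prod.snd = μ₂ ∧
      r = cutNorm1 μ (fun p q => W₁ p.1 q.1 - W₂ p.2 q.2)}.Nonempty := by
    refine ⟨_, μ₁.prod μ₂, inferInstance, ?_, ?_, rfl⟩
    · simp [Measure.map_fst_prod]
    · simp [Measure.map_snd_prod]
  -- RHS elements are in the LHS set
  have hsub : ∀ r ∈ {r : ℝ | ∃ μ : Measure (S₁ × S₂), IsProbabilityMeasure μ ∧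
      μ.map Prod.fst = μ₁ ∧ μ.map Prod.snd = μ₂ ∧
      r = cutNorm1 μ (fun p q => W₁ p.1 q.1 - W₂ p.2 q.2)},
      r ∈ {r : ℝ | ∃ (Ω : Type) (_ : MeasurableSpace Ω) (ν : Measure Ω),
        IsProbabilityMeasure ν ∧ ∃ (φ₁ : Ω → S₁) (φ₂ : Ω → S₂),
        MeasurePreserving φ₁ ν μ₁ ∧ MeasurePreserving φ₂ ν μ₂ ∧
        r = cutNorm1 ν (fun x y => W₁ (φ₁ x) (φ₁ y) - W₂ (φ₂ x) (φ₂ y))} := by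
    rintro r ⟨μ, hμ, h1, h2, rfl⟩
    exact ⟨S₁ × S₂, inferInstance, μ, hμ, Prod.fst, Prod.snd,
      ⟨measurable_fst, h1⟩, ⟨measurable_snd, h2⟩, rfl⟩
  have hbddL : BddBelow {r : ℝ | ∃ (Ω : Type) (_ : MeasurableSpace Ω) (ν : Measure Ω),
      IsProbabilityMeasure ν ∧ ∃ (φ₁ : Ω → S₁) (φ₂ : Ω → S₂),
      MeasurePreserving φ₁ ν μ₁ ∧ MeasurePreserving φ₂ ν μ₂ ∧
      r = cutNorm1 ν (fun x y => W₁ (φ₁ x) (φ₁ y) - W₂ (φ₂ x) (φ₂ y))} := by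
    refine ⟨0, ?_⟩
    rintro r ⟨Ω, mΩ, ν, hν, φ₁, φ₂, hφ₁, hφ₂, rfl⟩
    have i1 : Integrable (fun p : Ω × Ω => W₁ (φ₁ p.1) (φ₁ p.2)) (ν.prod ν) :=
      ((hφ₁.prod hφ₁).integrable_comp hW₁.aestronglyMeasurable).2 hW₁
    have i2 : Integrable (fun p : Ω × Ω => W₂ (φ₂ p.1) (φ₂ p.2)) (ν.prod ν) :=
      ((hφ₂.prod hφ₂).integrable_comp hW₂.aestronglyMeasurable).2 hW₂
    exact cutNorm1_nonneg ν _ (i1.sub i2)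
  have hbddR : BddBelow {r : ℝ | ∃ μ : Measure (S₁ × S₂), IsProbabilityMeasure μ ∧
      μ.map Prod.fst = μ₁ ∧ μ.map Prod.snd = μ₂ ∧
      r = cutNorm1 μ (fun p q => W₁ p.1 q.1 - W₂ p.2 q.2)} := by
    refine ⟨0, ?_⟩
    rintro r ⟨μ, hμ, h1, h2, rfl⟩
    exact cutNorm1_nonneg μ _ (integrable_diff hW₁ hW₂ μ h1 h2)
  rw [cutDist]
  apply le_antisymm
  · exact le_csInf hRHS_nonempty fun r hr => csInf_le hbddL (hsub r hr)
  · refine le_csInf ⟨_, hsub _ hRHS_nonempty.choose_spec⟩ ?_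
    rintro r ⟨Ω, mΩ, ν, hν, φ₁, φ₂, hφ₁, hφ₂, rfl⟩
    have hφm : Measurable (fun ω => (φ₁ ω, φ₂ ω)) :=
      hφ₁.measurable.prodMk hφ₂.measurable
    set μ : Measure (S₁ × S₂) := ν.map (fun ω => (φ₁ ω, φ₂ ω)) with hμdef
    have hμprob : IsProbabilityMeasure μ := Measure.isProbabilityMeasure_map hφm.aemeasurable
    have h1 : μ.map Prod.fst = μ₁ := by
      rw [hμdef, Measure.map_map measurable_fst hφm]
      exact hφ₁.map_eq
    have h2 : μ.map Prod.snd = μ₂ := by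
      rw [hμdef, Measure.map_map measurable_snd hφm]
      exact hφ₂.map_eq
    have hmp : MeasurePreserving (fun ω => (φ₁ ω, φ₂ ω)) ν μ := ⟨hφm, rfl⟩
    have hint := integrable_diff hW₁ hW₂ μ h1 h2
    refine le_trans (csInf_le hbddR ⟨μ, hμprob, h1, h2, rfl⟩) ?_
    exact cutNorm1_map_le ν μ _ hmp _ hint
end

section
/- For a kernel W with |W| ≤ 1 on a probability space S, the operator norm of the integral operator T_W from L^∞ to L¹ equals the cut norm ‖W‖_{□,2}, and for any p,q ∈ [1,∞], ‖T_W‖_{L^p → L^q} ≥ ‖T_W‖_{L^∞ → L¹}. -/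
open MeasureTheory ENNReal NNReal

/-- The cut norm defined with [-1,1]-valued measurable functions. -/
noncomputable def cutNorm2 {S : Type*} [MeasurableSpace S] (μ : Measure S)
    (W : S → S → ℝ) : ℝ :=
  sSup {r : ℝ | ∃ f g : S → ℝ, Measurable f ∧ Measurable g ∧
    (∀ x, f x ∈ Set.Icc (-1 : ℝ) 1) ∧ (∀ x, g x ∈ Set.Icc (-1 : ℝ) 1) ∧
    r = |∫ p, W p.1 p.2 * f p.1 * g p.2 ∂(μ.prod μ)|}

/-- The operator norm of the integral operator `T_W f (x) = ∫ W(x,y) f(y) dμ(y)`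
as an operator from `L^p` to `L^q`. -/
noncomputable def opNormW {S : Type*} [MeasurableSpace S] (μ : Measure S)
    (W : S → S → ℝ) (p q : ENNReal) : ℝ :=
  sSup {r : ℝ | ∃ f : S → ℝ, Measurable f ∧ eLpNorm f p μ ≤ 1 ∧
    r = (eLpNorm (fun x => ∫ y, W x y * f y ∂μ) q μ).toReal}

section Aux

lemma abs3le {a b c : ℝ} (ha : |a| ≤ 1) (hb : |b| ≤ 1) (hc : |c| ≤ 1) :
    |a * b * c| ≤ 1 := by
  rw [abs_mul, abs_mul]
  have h1 := abs_nonneg a; have h2 := abs_nonneg b; have h3 := abs_nonneg c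
  nlinarith [mul_nonneg h1 h2, mul_nonneg h2 h3]

lemma abs2le {a b : ℝ} (ha : |a| ≤ 1) (hb : |b| ≤ 1) : |a * b| ≤ 1 := by
  rw [abs_mul]
  have h1 := abs_nonneg a; have h2 := abs_nonneg b
  nlinarith

lemma intOfBdd {α : Type*} [MeasurableSpace α] (ν : Measure α) [IsFiniteMeasure ν]
    {h : α → ℝ} (hm : AEStronglyMeasurable h ν) {C : ℝ} (hb : ∀ x, |h x| ≤ C) :
    Integrable h ν :=
  (integrable_const C).mono' hm (Filter.Eventually.of_forall fun x => by
    simpa [Real.norm_eq_abs] using hb x)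

lemma eLpOne_toReal {α : Type*} [MeasurableSpace α] {ν : Measure α} {h : α → ℝ}
    (hi : Integrable h ν) : (eLpNorm h 1 ν).toReal = ∫ x, |h x| ∂ν := by
  rw [eLpNorm_one_eq_lintegral_enorm,
    ← integral_norm_eq_lintegral_enorm hi.aestronglyMeasurable]
  simp [Real.norm_eq_abs]

end Aux

/-- For a kernel `W` with `|W| ≤ 1`, the operator norm of `T_W : L^∞ → L¹` equals the
cut norm `‖W‖_{□,2}`, and for all `p, q` the `L^p → L^q` operator norm is at least the
`L^∞ → L¹` operator norm. -/
theorem opNorm_infty_one_eq_cutNorm2 {S : Type*} [MeasurableSpace S]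
    (μ : Measure S) [IsProbabilityMeasure μ]
    (W : S → S → ℝ)
    (hWm : Measurable (fun p : S × S => W p.1 p.2))
    (hsymm : ∀ x y, W x y = W y x)
    (hnonneg : ∀ x y, 0 ≤ W x y)
    (hbdd : ∀ x y, |W x y| ≤ 1) :
    opNormW μ W ⊤ 1 = cutNorm2 μ W ∧
    ∀ p q : ENNReal, 1 ≤ p → 1 ≤ q → opNormW μ W ⊤ 1 ≤ opNormW μ W p q := by
  classical
  set T : (S → ℝ) → S → ℝ := fun f x => ∫ y, W x y * f y ∂μ with hT
  -- section measurability
  have hWsec : ∀ x, Measurable fun y => W x y := fun x => hWm.comp measurable_prodMk_left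
  have hTmeas : ∀ f : S → ℝ, Measurable f → Measurable (T f) := by
    intro f hf
    have : StronglyMeasurable fun p : S × S => W p.1 p.2 * f p.2 :=
      (hWm.mul (hf.comp measurable_snd)).stronglyMeasurable
    exact this.integral_prod_right'.measurable
  -- pointwise bound on T f
  have hTle : ∀ f : S → ℝ, Measurable f → Integrable f μ →
      ∀ x, |T f x| ≤ ∫ y, |f y| ∂μ := by
    intro f hf hfi x
    have hsecint : Integrable (fun y => W x y * f y) μ :=
      hfi.abs.mono' ((hWsec x).mul hf).aestronglyMeasurable
        (Filter.Eventually.of_forall fun y => by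
          have h1 : |W x y * f y| ≤ |f y| := by
            rw [abs_mul]
            exact (mul_le_mul_of_nonneg_right (hbdd x y) (abs_nonneg _)).trans_eq (one_mul _)
          simpa [Real.norm_eq_abs, abs_mul] using h1)
    have hs1 : |T f x| ≤ ∫ y, |W x y * f y| ∂μ := by
      simp only [hT]
      simpa only [Real.norm_eq_abs] using
        norm_integral_le_integral_norm (μ := μ) (f := fun y => W x y * f y)
    have hs2 : ∫ y, |W x y * f y| ∂μ ≤ ∫ y, |f y| ∂μ := by
      refine integral_mono hsecint.abs hfi.abs fun y => ?_
      rw [abs_mul]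
      exact (mul_le_mul_of_nonneg_right (hbdd x y) (abs_nonneg _)).trans_eq (one_mul _)
    exact hs1.trans hs2
  -- from eLpNorm f p ≤ 1, p ≥ 1: integrability and L¹ bound
  have hL1 : ∀ (p : ENNReal), 1 ≤ p → ∀ f : S → ℝ, Measurable f → eLpNorm f p μ ≤ 1 →
      Integrable f μ ∧ ∫ y, |f y| ∂μ ≤ 1 := by
    intro p hp f hf hfe
    have h1 : eLpNorm f 1 μ ≤ 1 :=
      (eLpNorm_le_eLpNorm_of_exponent_le hp hf.aestronglyMeasurable).trans hfe
    have hfi : Integrable f μ := by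
      rw [← memLp_one_iff_integrable]
      exact ⟨hf.aestronglyMeasurable, h1.trans_lt (by norm_num)⟩
    refine ⟨hfi, ?_⟩
    have := eLpOne_toReal hfi
    have h2 : (eLpNorm f 1 μ).toReal ≤ (1 : ℝ≥0∞).toReal :=
      ENNReal.toReal_mono ENNReal.one_ne_top h1
    rw [this] at h2
    simpa using h2
  -- bound on the L^q norm of T f
  have hTq : ∀ (p q : ENNReal), 1 ≤ p → ∀ f : S → ℝ, Measurable f → eLpNorm f p μ ≤ 1 →
      eLpNorm (T f) q μ ≤ 1 := by
    intro p q hp f hf hfe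
    obtain ⟨hfi, hfb⟩ := hL1 p hp f hf hfe
    have hb : ∀ᵐ x ∂μ, ‖T f x‖ ≤ 1 :=
      Filter.Eventually.of_forall fun x => by
        simpa [Real.norm_eq_abs] using (hTle f hf hfi x).trans hfb
    calc eLpNorm (T f) q μ ≤ μ Set.univ ^ q.toReal⁻¹ * ENNReal.ofReal 1 :=
      eLpNorm_le_of_ae_bound hb
    _ = 1 := by simp
  -- the op norm sets
  have h0mem : ∀ p q : ENNReal,
      (0 : ℝ) ∈ {r : ℝ | ∃ f : S → ℝ, Measurable f ∧ eLpNorm f p μ ≤ 1 ∧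
        r = (eLpNorm (fun x => ∫ y, W x y * f y ∂μ) q μ).toReal} := by
    intro p q
    refine ⟨fun _ => 0, measurable_const, by simp, ?_⟩
    simp
  have hbddA : ∀ p q : ENNReal, 1 ≤ p →
      ∀ r ∈ {r : ℝ | ∃ f : S → ℝ, Measurable f ∧ eLpNorm f p μ ≤ 1 ∧
        r = (eLpNorm (fun x => ∫ y, W x y * f y ∂μ) q μ).toReal}, r ≤ 1 := by
    rintro p q hp r ⟨f, hf, hfe, rfl⟩
    have := hTq p q hp f hf hfe
    have h2 : (eLpNorm (T f) q μ).toReal ≤ (1 : ℝ≥0∞).toReal :=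
      ENNReal.toReal_mono ENNReal.one_ne_top this
    simpa [hT] using h2
  have hbddAboveA : ∀ p q : ENNReal, 1 ≤ p →
      BddAbove {r : ℝ | ∃ f : S → ℝ, Measurable f ∧ eLpNorm f p μ ≤ 1 ∧
        r = (eLpNorm (fun x => ∫ y, W x y * f y ∂μ) q μ).toReal} :=
    fun p q hp => ⟨1, fun r hr => hbddA p q hp r hr⟩
  -- the cut norm set
  set C : Set ℝ := {r : ℝ | ∃ f g : S → ℝ, Measurable f ∧ Measurable g ∧
    (∀ x, f x ∈ Set.Icc (-1 : ℝ) 1) ∧ (∀ x, g x ∈ Set.Icc (-1 : ℝ) 1) ∧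
    r = |∫ p, W p.1 p.2 * f p.1 * g p.2 ∂(μ.prod μ)|} with hC
  have hbddC : ∀ r ∈ C, r ≤ 1 := by
    rintro r ⟨f, g, hf, hg, hfI, hgI, rfl⟩
    have h1 : ∀ p : S × S, ‖W p.1 p.2 * f p.1 * g p.2‖ ≤ 1 := by
      intro p
      rw [Real.norm_eq_abs]
      exact abs3le (hbdd p.1 p.2) (abs_le.mpr ⟨(hfI p.1).1, (hfI p.1).2⟩)
        (abs_le.mpr ⟨(hgI p.2).1, (hgI p.2).2⟩)
    have := norm_integral_le_of_norm_le_const (μ := μ.prod μ)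
      (f := fun p : S × S => W p.1 p.2 * f p.1 * g p.2) (C := 1)
      (Filter.Eventually.of_forall h1)
    simpa [Real.norm_eq_abs] using this
  have h0C : (0 : ℝ) ∈ C := by
    refine ⟨fun _ => 0, fun _ => 0, measurable_const, measurable_const,
      fun x => by norm_num [Set.mem_Icc], fun x => by norm_num [Set.mem_Icc], by simp⟩
  have hbddAboveC : BddAbove C := ⟨1, fun r hr => hbddC r hr⟩
  have hC0le : (0 : ℝ) ≤ sSup C := le_csSup hbddAboveC h0C
  constructor
  · -- equality
    apply le_antisymm
    · -- opNorm ≤ cutNorm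
      apply Real.sSup_le _ hC0le
      rintro r ⟨f, hf, hfe, rfl⟩
      -- truncate f
      set f' : S → ℝ := fun y => max (min (f y) 1) (-1) with hf'def
      have hf' : Measurable f' := (hf.min measurable_const).max measurable_const
      have hf'I : ∀ x, f' x ∈ Set.Icc (-1 : ℝ) 1 := fun x =>
        ⟨le_max_right _ _, max_le ((min_le_right _ _)) (by norm_num)⟩
      have hf'b : ∀ x, |f' x| ≤ 1 := fun x => abs_le.mpr ⟨(hf'I x).1, (hf'I x).2⟩
      have hff' : f =ᵐ[μ] f' := by
        have h1 : ∀ᵐ x ∂μ, (‖f x‖₊ : ℝ≥0∞) ≤ eLpNormEssSup f μ := ENNReal.ae_le_essSup (fun x => (‖f x‖₊ : ℝ≥0∞))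
        have h2 : eLpNormEssSup f μ ≤ 1 := by rwa [← eLpNorm_exponent_top]
        filter_upwards [h1] with x hx
        have h3 : (‖f x‖₊ : ℝ≥0∞) ≤ 1 := hx.trans h2
        have h5 : ‖f x‖₊ ≤ (1 : ℝ≥0) := by exact_mod_cast h3
        have h4 : |f x| ≤ 1 := by
          rw [← Real.norm_eq_abs, ← coe_nnnorm]
          exact_mod_cast h5
        have h6 := abs_le.mp h4
        simp only [hf'def]
        rw [min_eq_left h6.2, max_eq_left h6.1]
      have hTf : T f = T f' := by
        funext x
        exact integral_congr_ae (hff'.mono fun y h => by dsimp only; rw [h])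
      have hf'i : Integrable f' μ := intOfBdd μ hf'.aestronglyMeasurable hf'b
      have hTf'b : ∀ x, |T f' x| ≤ 1 := by
        intro x
        refine (hTle f' hf' hf'i x).trans ?_
        calc ∫ y, |f' y| ∂μ ≤ ∫ _, (1 : ℝ) ∂μ :=
          integral_mono hf'i.abs (integrable_const 1) fun y => hf'b y
        _ = 1 := by simp
      have hTf'i : Integrable (T f') μ :=
        intOfBdd μ (hTmeas f' hf').aestronglyMeasurable hTf'b
      set g : S → ℝ := fun x => if 0 ≤ T f' x then (1 : ℝ) else -1 with hgdef
      have hg : Measurable g :=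
        Measurable.ite (measurableSet_le measurable_const (hTmeas f' hf'))
          measurable_const measurable_const
      have hgI : ∀ x, g x ∈ Set.Icc (-1 : ℝ) 1 := by
        intro x; simp only [hgdef]
        split <;> norm_num
      have hgb : ∀ x, |g x| ≤ 1 := fun x => abs_le.mpr ⟨(hgI x).1, (hgI x).2⟩
      -- compute the double integral
      have hprodm : Measurable fun p : S × S => W p.1 p.2 * g p.1 * f' p.2 :=
        (hWm.mul (hg.comp measurable_fst)).mul (hf'.comp measurable_snd)
      have hprodint : Integrable (fun p : S × S => W p.1 p.2 * g p.1 * f' p.2) (μ.prod μ) := by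
        refine intOfBdd (μ.prod μ) hprodm.aestronglyMeasurable (C := 1) fun p => ?_
        exact abs3le (hbdd p.1 p.2) (hgb p.1) (hf'b p.2)
      have hdouble : ∫ p, W p.1 p.2 * g p.1 * f' p.2 ∂(μ.prod μ) = ∫ x, |T f' x| ∂μ := by
        rw [integral_prod _ hprodint]
        congr 1
        funext x
        have h1 : ∀ y, W x y * g x * f' y = g x * (W x y * f' y) := fun y => by ring
        simp_rw [h1]
        rw [integral_const_mul]
        by_cases h : 0 ≤ T f' x
        · rw [abs_of_nonneg h]; simp [hgdef, h, hT]; intro h'; exact absurd h' (not_lt.mpr h)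
        · rw [abs_of_neg (lt_of_not_ge h)]; simp [hgdef, h, hT]; intro h'; exact absurd h' h
      have hr : (eLpNorm (fun x => ∫ y, W x y * f y ∂μ) 1 μ).toReal =
          |∫ p, W p.1 p.2 * g p.1 * f' p.2 ∂(μ.prod μ)| := by
        have : (fun x => ∫ y, W x y * f y ∂μ) = T f := rfl
        rw [this, hTf, eLpOne_toReal hTf'i, hdouble,
          abs_of_nonneg (integral_nonneg fun x => abs_nonneg _)]
      rw [hr]
      exact le_csSup hbddAboveC ⟨g, f', hg, hf', hgI, hf'I, rfl⟩
    · -- cutNorm ≤ opNorm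
      have h0A : (0 : ℝ) ≤ opNormW μ W ⊤ 1 :=
        le_csSup (hbddAboveA ⊤ 1 le_top) (h0mem ⊤ 1)
      apply Real.sSup_le _ h0A
      rintro r ⟨f, g, hf, hg, hfI, hgI, rfl⟩
      have hfb : ∀ x, |f x| ≤ 1 := fun x => abs_le.mpr ⟨(hfI x).1, (hfI x).2⟩
      have hgb : ∀ x, |g x| ≤ 1 := fun x => abs_le.mpr ⟨(hgI x).1, (hgI x).2⟩
      have hgtop : eLpNorm g ⊤ μ ≤ 1 := by
        have := eLpNorm_le_of_ae_bound (p := ⊤) (μ := μ) (f := g) (C := 1)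
          (Filter.Eventually.of_forall fun x => by simpa [Real.norm_eq_abs] using hgb x)
        simpa using this
      have hgi : Integrable g μ := intOfBdd μ hg.aestronglyMeasurable hgb
      have hTgb : ∀ x, |T g x| ≤ 1 := by
        intro x
        refine (hTle g hg hgi x).trans ?_
        calc ∫ y, |g y| ∂μ ≤ ∫ _, (1 : ℝ) ∂μ :=
          integral_mono hgi.abs (integrable_const 1) fun y => hgb y
        _ = 1 := by simp
      have hTgi : Integrable (T g) μ :=
        intOfBdd μ (hTmeas g hg).aestronglyMeasurable hTgb
      have hprodm : Measurable fun p : S × S => W p.1 p.2 * f p.1 * g p.2 :=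
        (hWm.mul (hf.comp measurable_fst)).mul (hg.comp measurable_snd)
      have hprodint : Integrable (fun p : S × S => W p.1 p.2 * f p.1 * g p.2) (μ.prod μ) := by
        refine intOfBdd (μ.prod μ) hprodm.aestronglyMeasurable (C := 1) fun p => ?_
        exact abs3le (hbdd p.1 p.2) (hfb p.1) (hgb p.2)
      have hdouble : ∫ p, W p.1 p.2 * f p.1 * g p.2 ∂(μ.prod μ) = ∫ x, f x * T g x ∂μ := by
        rw [integral_prod _ hprodint]
        congr 1
        funext x
        have h1 : ∀ y, W x y * f x * g y = f x * (W x y * g y) := fun y => by ring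
        simp_rw [h1]
        rw [integral_const_mul]
      have hmulint : Integrable (fun x => f x * T g x) μ := by
        refine intOfBdd μ (hf.mul (hTmeas g hg)).aestronglyMeasurable (C := 1) fun x => ?_
        exact abs2le (hfb x) (hTgb x)
      have key : |∫ p, W p.1 p.2 * f p.1 * g p.2 ∂(μ.prod μ)| ≤
          (eLpNorm (fun x => ∫ y, W x y * g y ∂μ) 1 μ).toReal := by
        have : (fun x => ∫ y, W x y * g y ∂μ) = T g := rfl
        rw [this, eLpOne_toReal hTgi, hdouble]
        have hs1 : |∫ x, f x * T g x ∂μ| ≤ ∫ x, |f x * T g x| ∂μ := by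
          simpa only [Real.norm_eq_abs] using
            norm_integral_le_integral_norm (μ := μ) (f := fun x => f x * T g x)
        have hs2 : ∫ x, |f x * T g x| ∂μ ≤ ∫ x, |T g x| ∂μ := by
          refine integral_mono hmulint.abs hTgi.abs fun x => ?_
          rw [abs_mul]
          exact (mul_le_mul_of_nonneg_right (hfb x) (abs_nonneg _)).trans_eq (one_mul _)
        exact hs1.trans hs2
      exact key.trans (le_csSup (hbddAboveA ⊤ 1 le_top) ⟨g, hg, hgtop, rfl⟩)
  · -- monotonicity
    intro p q hp hq
    have h0 : (0 : ℝ) ≤ opNormW μ W p q :=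
      le_csSup (hbddAboveA p q hp) (h0mem p q)
    apply Real.sSup_le _ h0
    rintro r ⟨f, hf, hfe, rfl⟩
    have hfp : eLpNorm f p μ ≤ 1 :=
      (eLpNorm_le_eLpNorm_of_exponent_le le_top hf.aestronglyMeasurable).trans hfe
    have hq1 : (eLpNorm (T f) 1 μ).toReal ≤ (eLpNorm (T f) q μ).toReal := by
      refine ENNReal.toReal_mono ?_ ?_
      · exact ((hTq p q hp f hf hfp).trans_lt (by norm_num)).ne
      · exact eLpNorm_le_eLpNorm_of_exponent_le hq (hTmeas f hf).aestronglyMeasurable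
    exact hq1.trans (le_csSup (hbddAboveA p q hp) ⟨f, hf, hfp, rfl⟩)
end

section
/- If A is a closed separable subspace of L¹(S,F,μ) for a probability space (S,F,μ), then there exists a jointly measurable function Φ : A × S → ℝ such that for every f ∈ A, Φ(f,x) = f(x) for μ-almost every x ∈ S. -/
open MeasureTheory Filter Topology
open scoped ENNReal NNReal

set_option maxHeartbeats 1000000

/-- If `A` is a closed separable subspace of `L¹(S,μ)` for a probability space `(S,μ)`,
then there is a jointly measurable `Φ : A × S → ℝ` such that for every `f ∈ A`,
`Φ(f, x) = f(x)` for almost every `x`. -/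
theorem exists_measurable_evaluation {S : Type*} [MeasurableSpace S]
    (μ : Measure S) [IsProbabilityMeasure μ]
    [MeasurableSpace (Lp ℝ 1 μ)] [BorelSpace (Lp ℝ 1 μ)]
    (A : Submodule ℝ (Lp ℝ 1 μ))
    (hclosed : IsClosed (A : Set (Lp ℝ 1 μ)))
    (hsep : TopologicalSpace.IsSeparable (A : Set (Lp ℝ 1 μ))) :
    ∃ Φ : A × S → ℝ, Measurable Φ ∧
      ∀ f : A, ∀ᵐ x ∂μ, Φ (f, x) = ((f : Lp ℝ 1 μ) : S → ℝ) x := by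
  classical
  obtain ⟨c, hc_count, hc_sub⟩ := hsep
  have hc_ne : c.Nonempty := by
    rcases Set.eq_empty_or_nonempty c with rfl | h
    · exfalso
      have : (0 : Lp ℝ 1 μ) ∈ closure (∅ : Set (Lp ℝ 1 μ)) := hc_sub A.zero_mem
      rw [closure_empty] at this
      simpa using this
    · exact h
  obtain ⟨e, he⟩ := (Set.countable_iff_exists_surjective hc_ne).1 hc_count
  -- e : ℕ → c, surjective
  set E : ℕ → Lp ℝ 1 μ := fun n => (e n : Lp ℝ 1 μ) with hE
  -- density of E
  have hdense : ∀ (f : A) (k : ℕ), ∃ n, dist ((f : Lp ℝ 1 μ)) (E n) < (1/2 : ℝ)^k := by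
    intro f k
    have hf : (f : Lp ℝ 1 μ) ∈ closure c := hc_sub f.2
    obtain ⟨g, hg, hdg⟩ := Metric.mem_closure_iff.1 hf ((1/2 : ℝ)^k) (by positivity)
    obtain ⟨n, hn⟩ := he ⟨g, hg⟩
    exact ⟨n, by rw [hE]; simp [hn]; simpa using hdg⟩
  -- measurable representatives
  set h : ℕ → S → ℝ := fun n => (Lp.aestronglyMeasurable (E n)).mk _ with hh
  have hmeas : ∀ n, Measurable (h n) := fun n =>
    (Lp.aestronglyMeasurable (E n)).stronglyMeasurable_mk.measurable
  have hae : ∀ n, (E n : S → ℝ) =ᵐ[μ] h n := fun n =>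
    (Lp.aestronglyMeasurable (E n)).ae_eq_mk
  -- selection
  set nsel : ℕ → A → ℕ := fun k f => Nat.find (hdense f k) with hnsel
  have hnsel_meas : ∀ k, Measurable fun f : A => nsel k f := by
    intro k
    apply measurable_find
    intro n
    have : Measurable fun f : A => dist ((f : Lp ℝ 1 μ)) (E n) :=
      ((continuous_id.dist continuous_const).measurable).comp measurable_subtype_coe
    exact measurableSet_lt this measurable_const
  -- approximating functions
  set G : ℕ → A × S → ℝ := fun k p => h (nsel k p.1) p.2 with hG
  have hG_meas : ∀ k, Measurable (G k) := by
    intro k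
    have hF : Measurable fun q : S × ℕ => h q.2 q.1 :=
      measurable_from_prod_countable_left fun n => hmeas n
    exact hF.comp (measurable_snd.prodMk ((hnsel_meas k).comp measurable_fst))
  -- definition of Φ
  refine ⟨fun p => (limsup (fun k => ((G k p : ℝ) : EReal)) atTop).toReal, ?_, ?_⟩
  · apply measurable_ereal_toReal.comp
    exact Measurable.limsup fun k => measurable_coe_real_ereal.comp (hG_meas k)
  · intro f
    -- a.e. convergence of G k (f, ·) to f
    have key : ∀ᵐ x ∂μ, Tendsto (fun k => G k (f, x)) atTop (𝓝 (((f : Lp ℝ 1 μ) : S → ℝ) x)) := by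
      have hbound : ∀ k, ∫⁻ x, ‖((f : Lp ℝ 1 μ) : S → ℝ) x - G k (f, x)‖₊ ∂μ
          ≤ ENNReal.ofReal ((1/2 : ℝ)^k) := by
        intro k
        have h1 : (fun x => (‖((f : Lp ℝ 1 μ) : S → ℝ) x - G k (f, x)‖₊ : ℝ≥0∞))
            =ᵐ[μ] fun x => ‖(((f : Lp ℝ 1 μ) - E (nsel k f)) : S → ℝ) x‖₊ := by
          filter_upwards [hae (nsel k f), Lp.coeFn_sub ((f : Lp ℝ 1 μ)) (E (nsel k f))]
            with x hx1 hx2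
          simp [hG, hx2, ← hx1, Pi.sub_apply]
        rw [lintegral_congr_ae h1]; simp only [← enorm_eq_nnnorm]; rw [← eLpNorm_one_eq_lintegral_enorm]
        have h2 : eLpNorm (((f : Lp ℝ 1 μ) - E (nsel k f) : Lp ℝ 1 μ) : S → ℝ) 1 μ
            = ENNReal.ofReal ‖(f : Lp ℝ 1 μ) - E (nsel k f)‖ := by
          rw [Lp.norm_def, ENNReal.ofReal_toReal (Lp.eLpNorm_ne_top _)]
        rw [eLpNorm_congr_ae (Lp.coeFn_sub ((f : Lp ℝ 1 μ)) (E (nsel k f))).symm, h2]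
        apply ENNReal.ofReal_le_ofReal
        have := Nat.find_spec (hdense f k)
        rw [dist_eq_norm] at this
        exact le_of_lt this
      have hsum : ∫⁻ x, ∑' k, (‖((f : Lp ℝ 1 μ) : S → ℝ) x - G k (f, x)‖₊ : ℝ≥0∞) ∂μ ≠ ∞ := by
        rw [lintegral_tsum]
        · apply ne_of_lt
          calc ∑' k, ∫⁻ x, (‖((f : Lp ℝ 1 μ) : S → ℝ) x - G k (f, x)‖₊ : ℝ≥0∞) ∂μ
              ≤ ∑' k, ENNReal.ofReal ((1/2 : ℝ)^k) := ENNReal.tsum_le_tsum hbound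
            _ < ∞ := by
                have : ∑' k : ℕ, ENNReal.ofReal ((1/2 : ℝ)^k) = ENNReal.ofReal 2 := by
                  rw [← ENNReal.ofReal_tsum_of_nonneg (fun k => by positivity)]
                  · congr 1
                    rw [tsum_geometric_of_lt_one (by norm_num) (by norm_num)]
                    norm_num
                  · exact summable_geometric_of_lt_one (by norm_num) (by norm_num)
                rw [this]
                exact ENNReal.ofReal_lt_top
        · intro k
          apply AEMeasurable.coe_nnreal_ennreal
          apply AEMeasurable.nnnorm
          exact (Lp.aestronglyMeasurable ((f : Lp ℝ 1 μ))).aemeasurable.sub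
            ((hmeas (nsel k f)).comp measurable_id).aemeasurable
      have hfin : ∀ᵐ x ∂μ, ∑' k, (‖((f : Lp ℝ 1 μ) : S → ℝ) x - G k (f, x)‖₊ : ℝ≥0∞) ≠ ∞ :=
        ae_lt_top' (by
          apply AEMeasurable.ennreal_tsum
          intro k
          apply AEMeasurable.coe_nnreal_ennreal
          apply AEMeasurable.nnnorm
          exact (Lp.aestronglyMeasurable ((f : Lp ℝ 1 μ))).aemeasurable.sub
            ((hmeas (nsel k f)).comp measurable_id).aemeasurable) hsum |>.mono
          (fun x hx => hx.ne)
      filter_upwards [hfin] with x hx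
      have h0 : Tendsto (fun k => (‖((f : Lp ℝ 1 μ) : S → ℝ) x - G k (f, x)‖₊ : ℝ≥0∞))
          atTop (𝓝 0) := ENNReal.tendsto_atTop_zero_of_tsum_ne_top hx
      have h1 : Tendsto (fun k => ‖((f : Lp ℝ 1 μ) : S → ℝ) x - G k (f, x)‖) atTop (𝓝 0) := by
        have := (ENNReal.tendsto_toReal (by simp)).comp h0
        simpa [Function.comp_def] using this
      rw [tendsto_iff_norm_sub_tendsto_zero]
      simpa [norm_sub_rev] using h1
    filter_upwards [key] with x hx
    have : Tendsto (fun k => ((G k (f, x) : ℝ) : EReal)) atTop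
        (𝓝 ((((f : Lp ℝ 1 μ) : S → ℝ) x : EReal))) :=
      (continuous_coe_real_ereal.tendsto _).comp hx
    rw [this.limsup_eq]
    exact EReal.toReal_coe _
end
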